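/- arXiv:1304.4894 — 6 statements merged into one kernel-verified Lean document; each statement's English description precedes it below -/
import Mathlib

section
/- Let J = [0,∞) and let f : J → ℝ be differentiable on the interior of J with f' integrable on [u,v], where u, v ∈ J and 0 < u < v. Let q ≥ 1. If |f'|^q is convex on [u,v], then for every x ∈ [u,v]: |((v-x)(v·f(v) - u·f(x)) + (x-u)(v·f(x) - u·f(u)))/(v-u)² - (1/(v-u))·∫_u^v f(μ) dμ| ≤ ((v-x)²/(v-u)²)·A(u,v)^{1-1/q}·(1/6)^{1/q}·((2u+v)·|f'(x)|^q + (2v+u)·|f'(v)|^q)^{1/q} + ((x-u)²/(v-u)²)·A(u,v)^{1-1/q}·(1/6)^{1/q}·((2v+u)·|f'(x)|^q + (2u+v)·|f'(u)|^q)^{1/q}. -/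
open MeasureTheory Set

/-- Integral of a quadratic polynomial. -/
private lemma quad_int (a b A B C : ℝ) :
    ∫ t in a..b, (A * t ^ 2 + B * t + C) =
      A * (b ^ 3 - a ^ 3) / 3 + B * (b ^ 2 - a ^ 2) / 2 + C * (b - a) := by
  have h : ∀ t ∈ Set.uIcc a b,
      HasDerivAt (fun s : ℝ => A / 3 * s ^ 3 + B / 2 * s ^ 2 + C * s)
        (A * t ^ 2 + B * t + C) t := by
    intro t _
    have h1 : HasDerivAt (fun s : ℝ => A / 3 * s ^ 3) (A * t ^ 2) t := by
      have := (hasDerivAt_pow 3 t).const_mul (A / 3)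
      refine this.congr_deriv ?_
      push_cast
      ring
    have h2 : HasDerivAt (fun s : ℝ => B / 2 * s ^ 2) (B * t) t := by
      have := (hasDerivAt_pow 2 t).const_mul (B / 2)
      refine this.congr_deriv ?_
      push_cast
      ring
    have h3 : HasDerivAt (fun s : ℝ => C * s) C t := by
      simpa using (hasDerivAt_id t).const_mul C
    exact (h1.add h2).add h3
  rw [intervalIntegral.integral_eq_sub_of_hasDerivAt h
      ((Continuous.intervalIntegrable (by continuity) a b))]
  ring

/-- Hölder-type step for the weighted power mean inequality, `q > 1` case,
on a set integral over `Ioc a b`. -/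
private lemma holder_step (q : ℝ) (hq1 : 1 < q) {a b : ℝ} (w g : ℝ → ℝ)
    (hwc : Continuous w) (hw : ∀ t ∈ Set.Ioc a b, 0 ≤ w t)
    (hg : AEStronglyMeasurable g (volume.restrict (Set.Ioc a b)))
    (M : ℝ) (hM : ∀ t ∈ Set.Ioc a b, |g t| ≤ M) :
    ∫ t in Set.Ioc a b, w t * |g t| ≤
      (∫ t in Set.Ioc a b, w t) ^ (1 - 1 / q) *
        (∫ t in Set.Ioc a b, w t * |g t| ^ q) ^ (1 / q) := by
  have hq0 : (0:ℝ) < q := by linarith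
  have hq0' : q ≠ 0 := ne_of_gt hq0
  have hq1' : q - 1 ≠ 0 := by intro h; apply absurd hq1; intro h'; nlinarith
  set p : ℝ := q / (q - 1) with hp_def
  have hpq : Real.HolderConjugate p q := by
    exact Real.holderConjugate_comm.1 ((Real.holderConjugate_iff_eq_conjExponent hq1).2 hp_def)
  have hp_inv : 1 / p = 1 - 1 / q := by
    rw [hp_def]
    field_simp
  have hae : ∀ᵐ t ∂(volume.restrict (Set.Ioc a b)), t ∈ Set.Ioc a b :=
    ae_restrict_mem measurableSet_Ioc
  -- bound for w on Icc a b
  obtain ⟨Cw, hCw⟩ := IsCompact.exists_bound_of_continuousOn (isCompact_Icc (a := a) (b := b))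
    hwc.continuousOn
  set C1 : ℝ := max Cw 0 with hC1
  have hC1nn : 0 ≤ C1 := le_max_right _ _
  have hwle : ∀ t ∈ Set.Ioc a b, w t ≤ C1 := by
    intro t ht
    calc w t ≤ |w t| := le_abs_self _
      _ = ‖w t‖ := (Real.norm_eq_abs _).symm
      _ ≤ Cw := hCw t (Set.Ioc_subset_Icc_self ht)
      _ ≤ C1 := le_max_left _ _
  set M1 : ℝ := max M 0 with hM1
  have hM1nn : 0 ≤ M1 := le_max_right _ _
  have hMle : ∀ t ∈ Set.Ioc a b, |g t| ≤ M1 := fun t ht => (hM t ht).trans (le_max_left _ _)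
  set F : ℝ → ℝ := fun t => (w t) ^ (1 - 1 / q) with hF_def
  set G : ℝ → ℝ := fun t => (w t) ^ (1 / q) * |g t| with hG_def
  have hexp1 : (0:ℝ) ≤ 1 - 1 / q := by
    have : 1 / q ≤ 1 := by rw [div_le_one hq0]; linarith
    linarith
  have hexp2 : (0:ℝ) ≤ 1 / q := by positivity
  haveI : IsFiniteMeasure (volume.restrict (Set.Ioc a b)) :=
    ⟨by rw [Measure.restrict_apply_univ]; exact measure_Ioc_lt_top⟩
  have hFmeas : AEStronglyMeasurable F (volume.restrict (Set.Ioc a b)) :=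
    (hwc.measurable.pow measurable_const).aestronglyMeasurable
  have habs : AEStronglyMeasurable (fun t => |g t|) (volume.restrict (Set.Ioc a b)) :=
    hg.norm.congr (Filter.Eventually.of_forall fun t => (Real.norm_eq_abs _))
  have hGmeas : AEStronglyMeasurable G (volume.restrict (Set.Ioc a b)) :=
    ((hwc.measurable.pow measurable_const).aestronglyMeasurable).mul habs
  have hF : MemLp F (ENNReal.ofReal p) (volume.restrict (Set.Ioc a b)) := by
    refine MemLp.of_bound hFmeas (C1 ^ (1 - 1 / q)) ?_
    filter_upwards [hae] with t ht
    rw [Real.norm_eq_abs, abs_of_nonneg (Real.rpow_nonneg (hw t ht) _)]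
    exact Real.rpow_le_rpow (hw t ht) (hwle t ht) hexp1
  have hG : MemLp G (ENNReal.ofReal q) (volume.restrict (Set.Ioc a b)) := by
    refine MemLp.of_bound hGmeas (C1 ^ (1 / q) * M1) ?_
    filter_upwards [hae] with t ht
    rw [Real.norm_eq_abs, abs_of_nonneg (mul_nonneg (Real.rpow_nonneg (hw t ht) _) (abs_nonneg _))]
    exact mul_le_mul (Real.rpow_le_rpow (hw t ht) (hwle t ht) hexp2) (hMle t ht)
      (abs_nonneg _) (Real.rpow_nonneg hC1nn _)
  have hFnn : 0 ≤ᵐ[volume.restrict (Set.Ioc a b)] F := by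
    filter_upwards [hae] with t ht
    exact Real.rpow_nonneg (hw t ht) _
  have hGnn : 0 ≤ᵐ[volume.restrict (Set.Ioc a b)] G := by
    filter_upwards [hae] with t ht
    exact mul_nonneg (Real.rpow_nonneg (hw t ht) _) (abs_nonneg _)
  have key := integral_mul_le_Lp_mul_Lq_of_nonneg hpq hFnn hGnn hF hG
  have h1 : ∫ t in Set.Ioc a b, w t * |g t| = ∫ t in Set.Ioc a b, F t * G t := by
    refine integral_congr_ae ?_
    filter_upwards [hae] with t ht
    show w t * |g t| = w t ^ (1 - 1 / q) * (w t ^ (1 / q) * |g t|)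
    rw [← mul_assoc, ← Real.rpow_add' (hw t ht)
      (by rw [show ((1:ℝ) - 1 / q) + 1 / q = 1 by ring]; norm_num),
      show ((1:ℝ) - 1 / q) + 1 / q = 1 by ring, Real.rpow_one]
  have hexp3 : (1 - 1 / q) * p = 1 := by
    rw [hp_def]
    field_simp
  have hexp4 : 1 / q * q = 1 := by field_simp
  have h2 : ∫ t in Set.Ioc a b, F t ^ p = ∫ t in Set.Ioc a b, w t := by
    refine integral_congr_ae ?_
    filter_upwards [hae] with t ht
    show (w t ^ (1 - 1 / q)) ^ p = w t
    rw [← Real.rpow_mul (hw t ht), hexp3, Real.rpow_one]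
  have h3 : ∫ t in Set.Ioc a b, G t ^ q = ∫ t in Set.Ioc a b, w t * |g t| ^ q := by
    refine integral_congr_ae ?_
    filter_upwards [hae] with t ht
    show (w t ^ (1 / q) * |g t|) ^ q = w t * |g t| ^ q
    rw [Real.mul_rpow (Real.rpow_nonneg (hw t ht) _) (abs_nonneg _),
      ← Real.rpow_mul (hw t ht), hexp4, Real.rpow_one]
  calc ∫ t in Set.Ioc a b, w t * |g t| = ∫ t in Set.Ioc a b, F t * G t := h1
    _ ≤ (∫ t in Set.Ioc a b, F t ^ p) ^ (1 / p) * (∫ t in Set.Ioc a b, G t ^ q) ^ (1 / q) := key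
    _ = (∫ t in Set.Ioc a b, w t) ^ (1 - 1 / q) *
        (∫ t in Set.Ioc a b, w t * |g t| ^ q) ^ (1 / q) := by rw [h2, h3, hp_inv]

/-- Hölder-type inequality on an interval integral, `q ≥ 1`. -/
private lemma holder_interval (q : ℝ) (hq : 1 ≤ q) {a b : ℝ} (hab : a ≤ b) (w g : ℝ → ℝ)
    (hwc : Continuous w) (hw : ∀ t ∈ Set.Ioc a b, 0 ≤ w t)
    (hg : AEStronglyMeasurable g (volume.restrict (Set.Ioc a b)))
    (M : ℝ) (hM : ∀ t ∈ Set.Ioc a b, |g t| ≤ M) :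
    ∫ t in a..b, w t * |g t| ≤
      (∫ t in a..b, w t) ^ (1 - 1 / q) * (∫ t in a..b, w t * |g t| ^ q) ^ (1 / q) := by
  rw [intervalIntegral.integral_of_le hab, intervalIntegral.integral_of_le hab,
    intervalIntegral.integral_of_le hab]
  rcases eq_or_lt_of_le hq with h | h
  · rw [← h]
    norm_num
  · exact holder_step q h w g hwc hw hg M hM

set_option maxHeartbeats 1600000 in
theorem stmt_12 (f f' : ℝ → ℝ) (u v q : ℝ) (hu : 0 < u) (huv : u < v) (hq : 1 ≤ q)
    (hderiv : ∀ y ∈ interior (Set.Ici (0:ℝ)), HasDerivAt f (f' y) y)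
    (hint : IntervalIntegrable f' MeasureTheory.volume u v)
    (hconv : ∀ a ∈ Set.Icc u v, ∀ b ∈ Set.Icc u v, ∀ t ∈ Set.Icc (0:ℝ) 1,
      |f' (t * a + (1 - t) * b)| ^ q ≤ t * |f' a| ^ q + (1 - t) * |f' b| ^ q)
    (x : ℝ) (hx : x ∈ Set.Icc u v) :
    |((v - x) * (v * f v - u * f x) + (x - u) * (v * f x - u * f u)) / (v - u) ^ 2
        - (1 / (v - u)) * ∫ μ in u..v, f μ|
      ≤ ((v - x) ^ 2 / (v - u) ^ 2) * ((u + v) / 2) ^ (1 - 1 / q) *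
          ((1:ℝ) / 6) ^ (1 / q) *
          ((2 * u + v) * |f' x| ^ q + (2 * v + u) * |f' v| ^ q) ^ (1 / q)
        + ((x - u) ^ 2 / (v - u) ^ 2) * ((u + v) / 2) ^ (1 - 1 / q) *
          ((1:ℝ) / 6) ^ (1 / q) *
          ((2 * v + u) * |f' x| ^ q + (2 * u + v) * |f' u| ^ q) ^ (1 / q) := by
  obtain ⟨hux, hxv⟩ := hx
  have hq0 : (0:ℝ) < q := by linarith
  have hvu0 : (0:ℝ) < v - u := by linarith
  have hvu : v - u ≠ 0 := ne_of_gt hvu0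
  have hderiv' : ∀ y ∈ Set.Icc u v, HasDerivAt f (f' y) y := by
    intro y hy
    exact hderiv y (by rw [interior_Ici]; exact Set.mem_Ioi.mpr (lt_of_lt_of_le hu hy.1))
  have hfc : ContinuousOn f (Set.Icc u v) := fun y hy =>
    ((hderiv' y hy).continuousAt).continuousWithinAt
  have hsub1 : Set.uIcc x v ⊆ Set.Icc u v := by
    rw [Set.uIcc_of_le hxv]; exact Set.Icc_subset_Icc hux le_rfl
  have hsub2 : Set.uIcc u x ⊆ Set.Icc u v := by
    rw [Set.uIcc_of_le hux]; exact Set.Icc_subset_Icc le_rfl hxv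
  have huvIcc : Set.uIcc u v = Set.Icc u v := Set.uIcc_of_le huv.le
  have hf_int1 : IntervalIntegrable f volume u x := (hfc.mono hsub2).intervalIntegrable
  have hf_int2 : IntervalIntegrable f volume x v := (hfc.mono hsub1).intervalIntegrable
  have hf'_int1 : IntervalIntegrable f' volume u x := hint.mono_set (by rw [huvIcc]; exact hsub2)
  have hf'_int2 : IntervalIntegrable f' volume x v := hint.mono_set (by rw [huvIcc]; exact hsub1)
  have hf'm1 : AEStronglyMeasurable f' (volume.restrict (Set.Ioc u x)) :=
    hf'_int1.1.aestronglyMeasurable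
  have hf'm2 : AEStronglyMeasurable f' (volume.restrict (Set.Ioc x v)) :=
    hf'_int2.1.aestronglyMeasurable
  -- uniform bound on |f'| over [u, v]
  set M : ℝ := max |f' u| |f' v| with hM_def
  have hMnn : 0 ≤ M := le_trans (abs_nonneg _) (le_max_left _ _)
  have hM : ∀ t ∈ Set.Icc u v, |f' t| ≤ M := by
    intro t ht
    by_contra hcon
    push_neg at hcon
    set s : ℝ := (t - u) / (v - u) with hs_def
    have hs0 : 0 ≤ s := div_nonneg (by linarith [ht.1]) (by linarith)
    have hs1 : s ≤ 1 := (div_le_one (by linarith)).2 (by linarith [ht.2])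
    have harg : s * v + (1 - s) * u = t := by rw [hs_def]; field_simp; ring
    have h1 := hconv v ⟨huv.le, le_rfl⟩ u ⟨le_rfl, huv.le⟩ s ⟨hs0, hs1⟩
    rw [harg] at h1
    have h2 : |f' v| ^ q ≤ M ^ q :=
      Real.rpow_le_rpow (abs_nonneg _) (le_max_right _ _) hq0.le
    have h3 : |f' u| ^ q ≤ M ^ q :=
      Real.rpow_le_rpow (abs_nonneg _) (le_max_left _ _) hq0.le
    have h4 : M ^ q < |f' t| ^ q := Real.rpow_lt_rpow hMnn hcon hq0
    have h5 : s * |f' v| ^ q ≤ s * M ^ q := mul_le_mul_of_nonneg_left h2 hs0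
    have h6 : (1 - s) * |f' u| ^ q ≤ (1 - s) * M ^ q :=
      mul_le_mul_of_nonneg_left h3 (by linarith)
    nlinarith [h1, h4, h5, h6]
  -- the two kernels are nonnegative
  have hP1nn : ∀ t ∈ Set.Icc x v, 0 ≤ (v - u) * t + (u * v - v * x) := by
    intro t ht
    nlinarith [mul_nonneg (show (0:ℝ) ≤ v - u by linarith)
      (show (0:ℝ) ≤ t - x by linarith [ht.1]),
      mul_nonneg hu.le (show (0:ℝ) ≤ v - x by linarith)]
  have hP2nn : ∀ t ∈ Set.Icc u x, 0 ≤ (v - u) * t + (u * x - u * v) := by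
    intro t ht
    nlinarith [mul_nonneg (show (0:ℝ) ≤ v - u by linarith)
      (show (0:ℝ) ≤ t - u by linarith [ht.1]),
      mul_nonneg hu.le (show (0:ℝ) ≤ x - u by linarith)]
  -- integration by parts
  have ipp1 : ∫ μ in x..v, ((v - u) * μ + (u * v - v * x)) * f' μ
      = ((v - u) * v + (u * v - v * x)) * f v - ((v - u) * x + (u * v - v * x)) * f x
        - (v - u) * ∫ μ in x..v, f μ := by
    have h := intervalIntegral.integral_mul_deriv_eq_deriv_mul
      (u := fun μ => (v - u) * μ + (u * v - v * x)) (u' := fun _ => v - u)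
      (v := f) (v' := f') (a := x) (b := v)
      (fun t _ => by
        simpa using ((hasDerivAt_id t).const_mul (v - u)).add_const (u * v - v * x))
      (fun t ht => hderiv' t (hsub1 ht))
      intervalIntegrable_const hf'_int2
    rw [h, ← intervalIntegral.integral_const_mul]
  have ipp2 : ∫ μ in u..x, ((v - u) * μ + (u * x - u * v)) * f' μ
      = ((v - u) * x + (u * x - u * v)) * f x - ((v - u) * u + (u * x - u * v)) * f u
        - (v - u) * ∫ μ in u..x, f μ := by
    have h := intervalIntegral.integral_mul_deriv_eq_deriv_mul
      (u := fun μ => (v - u) * μ + (u * x - u * v)) (u' := fun _ => v - u)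
      (v := f) (v' := f') (a := u) (b := x)
      (fun t _ => by
        simpa using ((hasDerivAt_id t).const_mul (v - u)).add_const (u * x - u * v))
      (fun t ht => hderiv' t (hsub2 ht))
      intervalIntegrable_const hf'_int1
    rw [h, ← intervalIntegral.integral_const_mul]
  have hsplit : ∫ μ in u..v, f μ = (∫ μ in u..x, f μ) + ∫ μ in x..v, f μ :=
    (intervalIntegral.integral_add_adjacent_intervals hf_int1 hf_int2).symm
  have key : ((v - x) * (v * f v - u * f x) + (x - u) * (v * f x - u * f u)) / (v - u) ^ 2
        - (1 / (v - u)) * ∫ μ in u..v, f μ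
      = (1 / (v - u) ^ 2) * (∫ μ in x..v, ((v - u) * μ + (u * v - v * x)) * f' μ)
        + (1 / (v - u) ^ 2) * (∫ μ in u..x, ((v - u) * μ + (u * x - u * v)) * f' μ) := by
    rw [ipp1, ipp2, hsplit]
    field_simp
    ring
  -- nonnegativity of the bracketed sums
  have hT1nn : 0 ≤ (2 * u + v) * |f' x| ^ q + (2 * v + u) * |f' v| ^ q :=
    add_nonneg (mul_nonneg (by linarith) (Real.rpow_nonneg (abs_nonneg _) _))
      (mul_nonneg (by linarith) (Real.rpow_nonneg (abs_nonneg _) _))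
  have hT2nn : 0 ≤ (2 * v + u) * |f' x| ^ q + (2 * u + v) * |f' u| ^ q :=
    add_nonneg (mul_nonneg (by linarith) (Real.rpow_nonneg (abs_nonneg _) _))
      (mul_nonneg (by linarith) (Real.rpow_nonneg (abs_nonneg _) _))
  -- first term bound
  have bound1 : |(1 / (v - u) ^ 2) * ∫ μ in x..v, ((v - u) * μ + (u * v - v * x)) * f' μ|
      ≤ ((v - x) ^ 2 / (v - u) ^ 2) * ((u + v) / 2) ^ (1 - 1 / q) * ((1:ℝ) / 6) ^ (1 / q) *
        ((2 * u + v) * |f' x| ^ q + (2 * v + u) * |f' v| ^ q) ^ (1 / q) := by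
    set w : ℝ → ℝ := fun μ => (v - u) * μ + (u * v - v * x) with hw_def
    have hwcont : Continuous w := by rw [hw_def]; continuity
    have hA : |∫ μ in x..v, w μ * f' μ| ≤ ∫ μ in x..v, w μ * |f' μ| := by
      refine (intervalIntegral.abs_integral_le_integral_abs hxv).trans_eq ?_
      refine intervalIntegral.integral_congr fun t ht => ?_
      rw [Set.uIcc_of_le hxv] at ht
      rw [abs_mul, abs_of_nonneg (hP1nn t ht)]
    have hB := holder_interval q hq hxv w f' hwcont
      (fun t ht => hP1nn t (Set.Ioc_subset_Icc_self ht)) hf'm2 M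
      (fun t ht => hM t ⟨le_trans hux ht.1.le, ht.2⟩)
    have hC : ∫ μ in x..v, w μ = (v - x) ^ 2 * (u + v) / 2 := by
      have heq : ∫ μ in x..v, w μ
          = ∫ t in x..v, ((0:ℝ) * t ^ 2 + (v - u) * t + (u * v - v * x)) :=
        intervalIntegral.integral_congr fun t _ => by simp only [hw_def]; ring
      rw [heq, quad_int]
      ring
    have hD : ∫ μ in x..v, w μ * |f' μ| ^ q
        ≤ (v - x) ^ 2 * ((2 * u + v) * |f' x| ^ q + (2 * v + u) * |f' v| ^ q) / 6 := by
      rcases eq_or_lt_of_le hxv with hxe | hxl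
      · rw [← hxe]
        simp [intervalIntegral.integral_same]
      · have hvx : v - x ≠ 0 := ne_of_gt (by linarith)
        have habs : AEStronglyMeasurable (fun t => |f' t|) (volume.restrict (Set.Ioc x v)) :=
          hf'm2.norm.congr (Filter.Eventually.of_forall fun t => Real.norm_eq_abs (f' t))
        have hpow : AEStronglyMeasurable (fun t => |f' t| ^ q) (volume.restrict (Set.Ioc x v)) :=
          (habs.aemeasurable.pow aemeasurable_const).aestronglyMeasurable
        have hLint : IntervalIntegrable (fun μ => w μ * |f' μ| ^ q) volume x v := by
          rw [intervalIntegrable_iff_integrableOn_Ioc_of_le hxv]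
          refine Integrable.mono' (g := fun _ => (v * v) * M ^ q)
            (integrableOn_const measure_Ioc_lt_top.ne)
            (hwcont.aestronglyMeasurable.mul hpow) ?_
          filter_upwards [ae_restrict_mem measurableSet_Ioc] with t ht
          have htIcc : t ∈ Set.Icc x v := Set.Ioc_subset_Icc_self ht
          rw [Real.norm_eq_abs, abs_of_nonneg (mul_nonneg (hP1nn t htIcc)
            (Real.rpow_nonneg (abs_nonneg _) _))]
          refine mul_le_mul ?_
            (Real.rpow_le_rpow (abs_nonneg _)
              (hM t ⟨le_trans hux htIcc.1, htIcc.2⟩) hq0.le)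
            (Real.rpow_nonneg (abs_nonneg _) _) (mul_nonneg (by linarith) (by linarith))
          show (v - u) * t + (u * v - v * x) ≤ v * v
          nlinarith [htIcc.1, htIcc.2, hu.le]
        have hRint : IntervalIntegrable
            (fun μ => w μ * (((v - μ) * |f' x| ^ q + (μ - x) * |f' v| ^ q) / (v - x)))
            volume x v :=
          Continuous.intervalIntegrable (by rw [hw_def]; continuity) _ _
        have hmono : ∫ μ in x..v, w μ * |f' μ| ^ q ≤
            ∫ μ in x..v, w μ * (((v - μ) * |f' x| ^ q + (μ - x) * |f' v| ^ q) / (v - x)) := by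
          refine intervalIntegral.integral_mono_on hxv hLint hRint ?_
          intro t ht
          have hcv : |f' t| ^ q
              ≤ ((v - t) * |f' x| ^ q + (t - x) * |f' v| ^ q) / (v - x) := by
            set s : ℝ := (v - t) / (v - x) with hs_def
            have hs0 : 0 ≤ s := div_nonneg (by linarith [ht.2]) (by linarith)
            have hs1 : s ≤ 1 := (div_le_one (by linarith)).2 (by linarith [ht.1])
            have h1 := hconv x ⟨hux, hxv⟩ v ⟨huv.le, le_rfl⟩ s ⟨hs0, hs1⟩
            have harg : s * x + (1 - s) * v = t := by rw [hs_def]; field_simp; ring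
            rw [harg] at h1
            have heq2 : s * |f' x| ^ q + (1 - s) * |f' v| ^ q
                = ((v - t) * |f' x| ^ q + (t - x) * |f' v| ^ q) / (v - x) := by
              rw [hs_def]
              field_simp
              ring
            rw [heq2] at h1
            exact h1
          exact mul_le_mul_of_nonneg_left hcv (hP1nn t ht)
        have hval : ∫ μ in x..v,
              w μ * (((v - μ) * |f' x| ^ q + (μ - x) * |f' v| ^ q) / (v - x))
            = (v - x) ^ 2 * ((2 * u + v) * |f' x| ^ q + (2 * v + u) * |f' v| ^ q) / 6 := by
          set X := |f' x| ^ q with hX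
          set V' := |f' v| ^ q with hV
          have heq : ∫ μ in x..v, w μ * (((v - μ) * X + (μ - x) * V') / (v - x))
              = ∫ t in x..v, (((v - u) * (V' - X) / (v - x)) * t ^ 2
                + (((v - u) * (v * X - x * V') + (u * v - v * x) * (V' - X)) / (v - x)) * t
                + ((u * v - v * x) * (v * X - x * V') / (v - x))) :=
            intervalIntegral.integral_congr fun t _ => by
              simp only [hw_def]; field_simp; ring
          rw [heq, quad_int]
          field_simp
          ring
        linarith [hmono, hval.le, hval.ge]
    have hintnn : 0 ≤ ∫ μ in x..v, w μ * |f' μ| ^ q :=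
      intervalIntegral.integral_nonneg hxv fun t ht =>
        mul_nonneg (hP1nn t ht) (Real.rpow_nonneg (abs_nonneg _) _)
    have hbase1 : (0:ℝ) ≤ (v - x) ^ 2 * (u + v) / 2 :=
      div_nonneg (mul_nonneg (sq_nonneg _) (by linarith)) (by norm_num)
    have hchain : ∫ μ in x..v, w μ * |f' μ|
        ≤ ((v - x) ^ 2 * (u + v) / 2) ^ (1 - 1 / q) *
          ((v - x) ^ 2 * ((2 * u + v) * |f' x| ^ q + (2 * v + u) * |f' v| ^ q) / 6) ^ (1 / q) := by
      rw [hC] at hB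
      refine hB.trans ?_
      exact mul_le_mul_of_nonneg_left
        (Real.rpow_le_rpow hintnn hD (by positivity)) (Real.rpow_nonneg hbase1 _)
    have e1 : ((v - x) ^ 2 * (u + v) / 2) ^ (1 - 1 / q)
        = ((v - x) ^ 2) ^ (1 - 1 / q) * ((u + v) / 2) ^ (1 - 1 / q) := by
      rw [show (v - x) ^ 2 * (u + v) / 2 = (v - x) ^ 2 * ((u + v) / 2) by ring,
        Real.mul_rpow (sq_nonneg _) (by linarith)]
    have e2 : ((v - x) ^ 2 * ((2 * u + v) * |f' x| ^ q + (2 * v + u) * |f' v| ^ q) / 6) ^ (1 / q)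
        = ((v - x) ^ 2) ^ (1 / q) * (((1:ℝ) / 6) ^ (1 / q) *
          ((2 * u + v) * |f' x| ^ q + (2 * v + u) * |f' v| ^ q) ^ (1 / q)) := by
      rw [show (v - x) ^ 2 * ((2 * u + v) * |f' x| ^ q + (2 * v + u) * |f' v| ^ q) / 6
          = (v - x) ^ 2 * (((1:ℝ) / 6) * ((2 * u + v) * |f' x| ^ q + (2 * v + u) * |f' v| ^ q))
          by ring,
        Real.mul_rpow (sq_nonneg _) (mul_nonneg (by norm_num) hT1nn),
        Real.mul_rpow (by norm_num) hT1nn]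
    have e3 : ((v - x) ^ 2) ^ (1 - 1 / q) * ((v - x) ^ 2) ^ (1 / q) = (v - x) ^ 2 := by
      rw [← Real.rpow_add' (sq_nonneg _)
        (by rw [show ((1:ℝ) - 1 / q) + 1 / q = 1 by ring]; norm_num),
        show ((1:ℝ) - 1 / q) + 1 / q = 1 by ring, Real.rpow_one]
    have efin : (1 / (v - u) ^ 2) * (((v - x) ^ 2 * (u + v) / 2) ^ (1 - 1 / q) *
          ((v - x) ^ 2 * ((2 * u + v) * |f' x| ^ q + (2 * v + u) * |f' v| ^ q) / 6) ^ (1 / q))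
        = ((v - x) ^ 2 / (v - u) ^ 2) * ((u + v) / 2) ^ (1 - 1 / q) * ((1:ℝ) / 6) ^ (1 / q) *
          ((2 * u + v) * |f' x| ^ q + (2 * v + u) * |f' v| ^ q) ^ (1 / q) := by
      rw [e1, e2]
      linear_combination ((((u + v) / 2) ^ (1 - 1 / q) * ((1:ℝ) / 6) ^ (1 / q) *
        ((2 * u + v) * |f' x| ^ q + (2 * v + u) * |f' v| ^ q) ^ (1 / q)) / (v - u) ^ 2) * e3
    rw [abs_mul, abs_of_nonneg (show (0:ℝ) ≤ 1 / (v - u) ^ 2 by positivity)]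
    calc (1 / (v - u) ^ 2) * |∫ μ in x..v, w μ * f' μ|
        ≤ (1 / (v - u) ^ 2) * (∫ μ in x..v, w μ * |f' μ|) :=
          mul_le_mul_of_nonneg_left hA (by positivity)
      _ ≤ (1 / (v - u) ^ 2) * (((v - x) ^ 2 * (u + v) / 2) ^ (1 - 1 / q) *
            ((v - x) ^ 2 * ((2 * u + v) * |f' x| ^ q + (2 * v + u) * |f' v| ^ q) / 6) ^ (1 / q)) :=
          mul_le_mul_of_nonneg_left hchain (by positivity)
      _ = _ := efin
  -- second term bound
  have bound2 : |(1 / (v - u) ^ 2) * ∫ μ in u..x, ((v - u) * μ + (u * x - u * v)) * f' μ|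
      ≤ ((x - u) ^ 2 / (v - u) ^ 2) * ((u + v) / 2) ^ (1 - 1 / q) * ((1:ℝ) / 6) ^ (1 / q) *
        ((2 * v + u) * |f' x| ^ q + (2 * u + v) * |f' u| ^ q) ^ (1 / q) := by
    set w : ℝ → ℝ := fun μ => (v - u) * μ + (u * x - u * v) with hw_def
    have hwcont : Continuous w := by rw [hw_def]; continuity
    have hA : |∫ μ in u..x, w μ * f' μ| ≤ ∫ μ in u..x, w μ * |f' μ| := by
      refine (intervalIntegral.abs_integral_le_integral_abs hux).trans_eq ?_
      refine intervalIntegral.integral_congr fun t ht => ?_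
      rw [Set.uIcc_of_le hux] at ht
      rw [abs_mul, abs_of_nonneg (hP2nn t ht)]
    have hB := holder_interval q hq hux w f' hwcont
      (fun t ht => hP2nn t (Set.Ioc_subset_Icc_self ht)) hf'm1 M
      (fun t ht => hM t ⟨ht.1.le, le_trans ht.2 hxv⟩)
    have hC : ∫ μ in u..x, w μ = (x - u) ^ 2 * (u + v) / 2 := by
      have heq : ∫ μ in u..x, w μ
          = ∫ t in u..x, ((0:ℝ) * t ^ 2 + (v - u) * t + (u * x - u * v)) :=
        intervalIntegral.integral_congr fun t _ => by simp only [hw_def]; ring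
      rw [heq, quad_int]
      ring
    have hD : ∫ μ in u..x, w μ * |f' μ| ^ q
        ≤ (x - u) ^ 2 * ((2 * v + u) * |f' x| ^ q + (2 * u + v) * |f' u| ^ q) / 6 := by
      rcases eq_or_lt_of_le hux with hxe | hxl
      · rw [hxe]
        simp [intervalIntegral.integral_same]
      · have hvx : x - u ≠ 0 := ne_of_gt (by linarith)
        have habs : AEStronglyMeasurable (fun t => |f' t|) (volume.restrict (Set.Ioc u x)) :=
          hf'm1.norm.congr (Filter.Eventually.of_forall fun t => Real.norm_eq_abs (f' t))
        have hpow : AEStronglyMeasurable (fun t => |f' t| ^ q) (volume.restrict (Set.Ioc u x)) :=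
          (habs.aemeasurable.pow aemeasurable_const).aestronglyMeasurable
        have hLint : IntervalIntegrable (fun μ => w μ * |f' μ| ^ q) volume u x := by
          rw [intervalIntegrable_iff_integrableOn_Ioc_of_le hux]
          refine Integrable.mono' (g := fun _ => (v * v) * M ^ q)
            (integrableOn_const measure_Ioc_lt_top.ne)
            (hwcont.aestronglyMeasurable.mul hpow) ?_
          filter_upwards [ae_restrict_mem measurableSet_Ioc] with t ht
          have htIcc : t ∈ Set.Icc u x := Set.Ioc_subset_Icc_self ht
          rw [Real.norm_eq_abs, abs_of_nonneg (mul_nonneg (hP2nn t htIcc)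
            (Real.rpow_nonneg (abs_nonneg _) _))]
          refine mul_le_mul ?_
            (Real.rpow_le_rpow (abs_nonneg _)
              (hM t ⟨htIcc.1, le_trans htIcc.2 hxv⟩) hq0.le)
            (Real.rpow_nonneg (abs_nonneg _) _) (mul_nonneg (by linarith) (by linarith))
          show (v - u) * t + (u * x - u * v) ≤ v * v
          nlinarith [htIcc.1, htIcc.2, hu.le, hxv,
            mul_nonneg (show (0:ℝ) ≤ v - u by linarith)
              (show (0:ℝ) ≤ x - t by linarith [htIcc.2]),
            mul_nonneg (show (0:ℝ) ≤ v by linarith)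
              (show (0:ℝ) ≤ v - x + u by linarith)]
        have hRint : IntervalIntegrable
            (fun μ => w μ * (((μ - u) * |f' x| ^ q + (x - μ) * |f' u| ^ q) / (x - u)))
            volume u x :=
          Continuous.intervalIntegrable (by rw [hw_def]; continuity) _ _
        have hmono : ∫ μ in u..x, w μ * |f' μ| ^ q ≤
            ∫ μ in u..x, w μ * (((μ - u) * |f' x| ^ q + (x - μ) * |f' u| ^ q) / (x - u)) := by
          refine intervalIntegral.integral_mono_on hux hLint hRint ?_
          intro t ht
          have hcv : |f' t| ^ q
              ≤ ((t - u) * |f' x| ^ q + (x - t) * |f' u| ^ q) / (x - u) := by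
            set s : ℝ := (t - u) / (x - u) with hs_def
            have hs0 : 0 ≤ s := div_nonneg (by linarith [ht.1]) (by linarith)
            have hs1 : s ≤ 1 := (div_le_one (by linarith)).2 (by linarith [ht.2])
            have h1 := hconv x ⟨hux, hxv⟩ u ⟨le_rfl, huv.le⟩ s ⟨hs0, hs1⟩
            have harg : s * x + (1 - s) * u = t := by rw [hs_def]; field_simp; ring
            rw [harg] at h1
            have heq2 : s * |f' x| ^ q + (1 - s) * |f' u| ^ q
                = ((t - u) * |f' x| ^ q + (x - t) * |f' u| ^ q) / (x - u) := by
              rw [hs_def]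
              field_simp
              ring
            rw [heq2] at h1
            exact h1
          exact mul_le_mul_of_nonneg_left hcv (hP2nn t ht)
        have hval : ∫ μ in u..x,
              w μ * (((μ - u) * |f' x| ^ q + (x - μ) * |f' u| ^ q) / (x - u))
            = (x - u) ^ 2 * ((2 * v + u) * |f' x| ^ q + (2 * u + v) * |f' u| ^ q) / 6 := by
          set X := |f' x| ^ q with hX
          set U' := |f' u| ^ q with hU
          have heq : ∫ μ in u..x, w μ * (((μ - u) * X + (x - μ) * U') / (x - u))
              = ∫ t in u..x, (((v - u) * (X - U') / (x - u)) * t ^ 2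
                + (((v - u) * (x * U' - u * X) + (u * x - u * v) * (X - U')) / (x - u)) * t
                + ((u * x - u * v) * (x * U' - u * X) / (x - u))) :=
            intervalIntegral.integral_congr fun t _ => by
              simp only [hw_def]; field_simp; ring
          rw [heq, quad_int]
          field_simp
          ring
        linarith [hmono, hval.le, hval.ge]
    have hintnn : 0 ≤ ∫ μ in u..x, w μ * |f' μ| ^ q :=
      intervalIntegral.integral_nonneg hux fun t ht =>
        mul_nonneg (hP2nn t ht) (Real.rpow_nonneg (abs_nonneg _) _)
    have hbase1 : (0:ℝ) ≤ (x - u) ^ 2 * (u + v) / 2 :=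
      div_nonneg (mul_nonneg (sq_nonneg _) (by linarith)) (by norm_num)
    have hchain : ∫ μ in u..x, w μ * |f' μ|
        ≤ ((x - u) ^ 2 * (u + v) / 2) ^ (1 - 1 / q) *
          ((x - u) ^ 2 * ((2 * v + u) * |f' x| ^ q + (2 * u + v) * |f' u| ^ q) / 6) ^ (1 / q) := by
      rw [hC] at hB
      refine hB.trans ?_
      exact mul_le_mul_of_nonneg_left
        (Real.rpow_le_rpow hintnn hD (by positivity)) (Real.rpow_nonneg hbase1 _)
    have e1 : ((x - u) ^ 2 * (u + v) / 2) ^ (1 - 1 / q)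
        = ((x - u) ^ 2) ^ (1 - 1 / q) * ((u + v) / 2) ^ (1 - 1 / q) := by
      rw [show (x - u) ^ 2 * (u + v) / 2 = (x - u) ^ 2 * ((u + v) / 2) by ring,
        Real.mul_rpow (sq_nonneg _) (by linarith)]
    have e2 : ((x - u) ^ 2 * ((2 * v + u) * |f' x| ^ q + (2 * u + v) * |f' u| ^ q) / 6) ^ (1 / q)
        = ((x - u) ^ 2) ^ (1 / q) * (((1:ℝ) / 6) ^ (1 / q) *
          ((2 * v + u) * |f' x| ^ q + (2 * u + v) * |f' u| ^ q) ^ (1 / q)) := by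
      rw [show (x - u) ^ 2 * ((2 * v + u) * |f' x| ^ q + (2 * u + v) * |f' u| ^ q) / 6
          = (x - u) ^ 2 * (((1:ℝ) / 6) * ((2 * v + u) * |f' x| ^ q + (2 * u + v) * |f' u| ^ q))
          by ring,
        Real.mul_rpow (sq_nonneg _) (mul_nonneg (by norm_num) hT2nn),
        Real.mul_rpow (by norm_num) hT2nn]
    have e3 : ((x - u) ^ 2) ^ (1 - 1 / q) * ((x - u) ^ 2) ^ (1 / q) = (x - u) ^ 2 := by
      rw [← Real.rpow_add' (sq_nonneg _)
        (by rw [show ((1:ℝ) - 1 / q) + 1 / q = 1 by ring]; norm_num),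
        show ((1:ℝ) - 1 / q) + 1 / q = 1 by ring, Real.rpow_one]
    have efin : (1 / (v - u) ^ 2) * (((x - u) ^ 2 * (u + v) / 2) ^ (1 - 1 / q) *
          ((x - u) ^ 2 * ((2 * v + u) * |f' x| ^ q + (2 * u + v) * |f' u| ^ q) / 6) ^ (1 / q))
        = ((x - u) ^ 2 / (v - u) ^ 2) * ((u + v) / 2) ^ (1 - 1 / q) * ((1:ℝ) / 6) ^ (1 / q) *
          ((2 * v + u) * |f' x| ^ q + (2 * u + v) * |f' u| ^ q) ^ (1 / q) := by
      rw [e1, e2]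
      linear_combination ((((u + v) / 2) ^ (1 - 1 / q) * ((1:ℝ) / 6) ^ (1 / q) *
        ((2 * v + u) * |f' x| ^ q + (2 * u + v) * |f' u| ^ q) ^ (1 / q)) / (v - u) ^ 2) * e3
    rw [abs_mul, abs_of_nonneg (show (0:ℝ) ≤ 1 / (v - u) ^ 2 by positivity)]
    calc (1 / (v - u) ^ 2) * |∫ μ in u..x, w μ * f' μ|
        ≤ (1 / (v - u) ^ 2) * (∫ μ in u..x, w μ * |f' μ|) :=
          mul_le_mul_of_nonneg_left hA (by positivity)
      _ ≤ (1 / (v - u) ^ 2) * (((x - u) ^ 2 * (u + v) / 2) ^ (1 - 1 / q) *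
            ((x - u) ^ 2 * ((2 * v + u) * |f' x| ^ q + (2 * u + v) * |f' u| ^ q) / 6) ^ (1 / q)) :=
          mul_le_mul_of_nonneg_left hchain (by positivity)
      _ = _ := efin
  rw [key]
  exact le_trans (abs_add_le _ _) (add_le_add bound1 bound2)
end

section
/- Let J = [0,∞) and let f : J → ℝ be differentiable on the interior of J with f' integrable on [u,v], where u, v ∈ J and 0 < u < v. Let q ≥ 1 and s ∈ (0,1]. If |f'|^q is s-convex in the second sense on [u,v], then |(v·f(v) - u·f(u))/(v-u) - (1/(v-u))·∫_u^v f(μ) dμ| ≤ A(u,v)^{1-1/q}·(1/((s+1)(s+2)))^{1/q}·(((s+1)u+v)·|f'(u)|^q + ((s+1)v+u)·|f'(v)|^q)^{1/q}. -/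
open MeasureTheory intervalIntegral Set



theorem intA (u v s : ℝ) (huv : u < v) (hs0 : 0 < s) :
    ∫ x in u..v, x * (x - u) ^ s
      = (v - u) ^ (s + 1) * u / (s + 1) + (v - u) ^ (s + 2) / (s + 2) := by
  have hs1 : (0:ℝ) < s + 1 := by linarith
  have hs2 : (0:ℝ) < s + 2 := by linarith
  have hcont : Continuous fun x : ℝ => x * (x - u) ^ s :=
    continuous_id.mul ((Real.continuous_rpow_const hs0.le).comp (by continuity))
  have key : ∀ x ∈ Set.uIcc u v,
      HasDerivAt (fun y : ℝ => (y - u) ^ (s + 1) * u / (s + 1) + (y - u) ^ (s + 2) / (s + 2))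
        (x * (x - u) ^ s) x := by
    intro x hx
    have hx0 : 0 ≤ x - u := by
      rw [Set.uIcc_of_le huv.le] at hx; linarith [hx.1]
    have hbase : HasDerivAt (fun y : ℝ => y - u) 1 x := (hasDerivAt_id x).sub_const u
    have h1 : HasDerivAt (fun y : ℝ => (y - u) ^ (s + 1)) ((s + 1) * (x - u) ^ s) x := by
      have := (Real.hasDerivAt_rpow_const (x := x - u) (p := s + 1)
        (Or.inr (by linarith))).comp x hbase
      simpa [Function.comp_def, show s + 1 - 1 = s by ring] using this
    have h2 : HasDerivAt (fun y : ℝ => (y - u) ^ (s + 2)) ((s + 2) * (x - u) ^ (s + 1)) x := by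
      have := (Real.hasDerivAt_rpow_const (x := x - u) (p := s + 2)
        (Or.inr (by linarith))).comp x hbase
      simpa [Function.comp_def, show s + 2 - 1 = s + 1 by ring] using this
    have := ((h1.mul_const u).div_const (s + 1)).add (h2.div_const (s + 2))
    refine this.congr_deriv ?_
    have e1 : (x - u) ^ (s + 1) = (x - u) ^ s * (x - u) := by
      rw [Real.rpow_add' hx0 (by linarith), Real.rpow_one]
    field_simp
    rw [e1]; ring
  rw [intervalIntegral.integral_eq_sub_of_hasDerivAt key
    (hcont.intervalIntegrable u v)]
  simp [Real.zero_rpow hs1.ne', Real.zero_rpow hs2.ne']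



theorem intB (u v s : ℝ) (huv : u < v) (hs0 : 0 < s) :
    ∫ x in u..v, x * (v - x) ^ s
      = (v - u) ^ (s + 1) * v / (s + 1) - (v - u) ^ (s + 2) / (s + 2) := by
  have hs1 : (0:ℝ) < s + 1 := by linarith
  have hs2 : (0:ℝ) < s + 2 := by linarith
  have hcont : Continuous fun x : ℝ => x * (v - x) ^ s :=
    continuous_id.mul ((Real.continuous_rpow_const hs0.le).comp (by continuity))
  have key : ∀ x ∈ Set.uIcc u v,
      HasDerivAt (fun y : ℝ => (v - y) ^ (s + 2) / (s + 2) - (v - y) ^ (s + 1) * v / (s + 1))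
        (x * (v - x) ^ s) x := by
    intro x hx
    have hx0 : 0 ≤ v - x := by
      rw [Set.uIcc_of_le huv.le] at hx; linarith [hx.2]
    have hbase : HasDerivAt (fun y : ℝ => v - y) (-1) x := (hasDerivAt_id x).const_sub v |>.congr_deriv (by ring)
    have h1 : HasDerivAt (fun y : ℝ => (v - y) ^ (s + 1)) (-((s + 1) * (v - x) ^ s)) x := by
      have := (Real.hasDerivAt_rpow_const (x := v - x) (p := s + 1)
        (Or.inr (by linarith))).comp x hbase
      simpa [Function.comp_def, show s + 1 - 1 = s by ring] using this
    have h2 : HasDerivAt (fun y : ℝ => (v - y) ^ (s + 2)) (-((s + 2) * (v - x) ^ (s + 1))) x := by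
      have := (Real.hasDerivAt_rpow_const (x := v - x) (p := s + 2)
        (Or.inr (by linarith))).comp x hbase
      simpa [Function.comp_def, show s + 2 - 1 = s + 1 by ring] using this
    have := (h2.div_const (s + 2)).sub ((h1.mul_const v).div_const (s + 1))
    refine this.congr_deriv ?_
    have e1 : (v - x) ^ (s + 1) = (v - x) ^ s * (v - x) := by
      rw [Real.rpow_add' hx0 (by linarith), Real.rpow_one]
    field_simp
    rw [e1]; ring
  rw [intervalIntegral.integral_eq_sub_of_hasDerivAt key (hcont.intervalIntegrable u v)]
  simp [Real.zero_rpow hs1.ne', Real.zero_rpow hs2.ne']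



theorem ident (f f' : ℝ → ℝ) (u v : ℝ) (hu : 0 < u) (huv : u < v)
    (hderiv : ∀ y ∈ interior (Set.Ici (0:ℝ)), HasDerivAt f (f' y) y)
    (hint : IntervalIntegrable f' MeasureTheory.volume u v) :
    ∫ x in u..v, x * f' x = v * f v - u * f u - ∫ μ in u..v, f μ := by
  have hmem : ∀ x ∈ Set.uIcc u v, HasDerivAt f (f' x) x := by
    intro x hx
    rw [Set.uIcc_of_le huv.le] at hx
    exact hderiv x (by rw [interior_Ici]; exact lt_of_lt_of_le hu hx.1)
  have hg : ∀ x ∈ Set.uIcc u v, HasDerivAt (fun y => y * f y) (f x + x * f' x) x := by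
    intro x hx
    have := (hasDerivAt_id x).mul (hmem x hx)
    simpa [mul_comm, Pi.mul_def] using this
  have hfc : ContinuousOn f (Set.uIcc u v) := fun x hx => ((hmem x hx).continuousAt).continuousWithinAt
  have hfint : IntervalIntegrable f MeasureTheory.volume u v := hfc.intervalIntegrable
  have hxf' : IntervalIntegrable (fun x => x * f' x) MeasureTheory.volume u v :=
    hint.continuousOn_mul continuousOn_id
  have := intervalIntegral.integral_eq_sub_of_hasDerivAt hg (hfint.add hxf')
  rw [intervalIntegral.integral_add hfint hxf'] at this
  linarith



set_option maxHeartbeats 1000000 in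
theorem lemC (f' : ℝ → ℝ) (u v q s : ℝ) (hu : 0 < u) (huv : u < v)
    (hq : 1 ≤ q) (hs0 : 0 < s)
    (hint : IntervalIntegrable f' MeasureTheory.volume u v)
    (hsconv : ∀ a ∈ Set.Icc u v, ∀ b ∈ Set.Icc u v, ∀ t ∈ Set.Icc (0:ℝ) 1,
      |f' (t * a + (1 - t) * b)| ^ q ≤ t ^ s * |f' a| ^ q + (1 - t) ^ s * |f' b| ^ q) :
    ∫ x in u..v, x * |f' x| ^ q
      ≤ (v - u) * (((s + 1) * u + v) * |f' u| ^ q + ((s + 1) * v + u) * |f' v| ^ q)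
          / ((s + 1) * (s + 2)) := by
  have hvu : (0:ℝ) < v - u := by linarith
  set A0 := |f' u| ^ q with hA0
  set B0 := |f' v| ^ q with hB0
  have hA0n : 0 ≤ A0 := Real.rpow_nonneg (abs_nonneg _) _
  have hB0n : 0 ≤ B0 := Real.rpow_nonneg (abs_nonneg _) _
  have hpt : ∀ x ∈ Set.Icc u v,
      |f' x| ^ q ≤ ((v - x) / (v - u)) ^ s * A0 + ((x - u) / (v - u)) ^ s * B0 := by
    intro x hx
    have ht : (v - x) / (v - u) ∈ Set.Icc (0:ℝ) 1 := by
      constructor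
      · exact div_nonneg (by linarith [hx.2]) hvu.le
      · rw [div_le_one hvu]; linarith [hx.1]
    have := hsconv u ⟨le_refl u, huv.le⟩ v ⟨huv.le, le_refl v⟩ _ ht
    have e1 : (v - x) / (v - u) * u + (1 - (v - x) / (v - u)) * v = x := by
      field_simp; ring
    have e2 : 1 - (v - x) / (v - u) = (x - u) / (v - u) := by field_simp; ring
    rw [e1, e2] at this
    exact this
  -- bound |f'| pointwise to get integrability
  have hbd : ∀ x ∈ Set.Icc u v, x * |f' x| ^ q ≤ v * (A0 + B0) := by
    intro x hx
    have h1 : ((v - x) / (v - u)) ^ s ≤ 1 :=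
      Real.rpow_le_one (div_nonneg (by linarith [hx.2]) hvu.le)
        (by rw [div_le_one hvu]; linarith [hx.1]) hs0.le
    have h2 : ((x - u) / (v - u)) ^ s ≤ 1 :=
      Real.rpow_le_one (div_nonneg (by linarith [hx.1]) hvu.le)
        (by rw [div_le_one hvu]; linarith [hx.2]) hs0.le
    have h3 : |f' x| ^ q ≤ A0 + B0 := by
      refine (hpt x hx).trans ?_
      nlinarith [Real.rpow_nonneg (show (0:ℝ) ≤ (v-x)/(v-u) from div_nonneg (by linarith [hx.2]) hvu.le) s]
    have hx0 : 0 < x := lt_of_lt_of_le hu hx.1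
    calc x * |f' x| ^ q ≤ x * (A0 + B0) := by
          exact mul_le_mul_of_nonneg_left h3 hx0.le
      _ ≤ v * (A0 + B0) := by
          exact mul_le_mul_of_nonneg_right (hx.2) (by linarith)
  -- integrability of LHS
  have hf'Icc : IntegrableOn f' (Set.Icc u v) volume :=
    (intervalIntegrable_iff_integrableOn_Icc_of_le huv.le).1 hint
  have hmeas : AEStronglyMeasurable (fun x => x * |f' x| ^ q)
      (volume.restrict (Set.Icc u v)) := by
    have h1 : AEMeasurable f' (volume.restrict (Set.Icc u v)) :=
      hf'Icc.aemeasurable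
    have h2 : AEMeasurable (fun x => |f' x| ^ q) (volume.restrict (Set.Icc u v)) :=
      (Real.continuous_rpow_const (by linarith)).measurable.comp_aemeasurable (continuous_abs.measurable.comp_aemeasurable h1)
    exact (aemeasurable_id.mul h2).aestronglyMeasurable
  have hLint : IntervalIntegrable (fun x => x * |f' x| ^ q) volume u v := by
    rw [intervalIntegrable_iff_integrableOn_Icc_of_le huv.le]
    refine Integrable.mono' (integrable_const (v * (A0 + B0))) hmeas ?_
    refine (ae_restrict_iff' measurableSet_Icc).2 (Filter.Eventually.of_forall ?_)
    intro x hx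
    have hx0 : 0 < x := lt_of_lt_of_le hu hx.1
    rw [Real.norm_eq_abs, abs_of_nonneg (by positivity)]
    exact hbd x hx
  -- RHS integrand continuous
  have hRcont : Continuous (fun x : ℝ =>
      A0 / (v - u) ^ s * (x * (v - x) ^ s) + B0 / (v - u) ^ s * (x * (x - u) ^ s)) := by
    have c1 : Continuous fun x : ℝ => x * (v - x) ^ s :=
      continuous_id.mul ((Real.continuous_rpow_const hs0.le).comp (continuous_const.sub continuous_id))
    have c2 : Continuous fun x : ℝ => x * (x - u) ^ s :=
      continuous_id.mul ((Real.continuous_rpow_const hs0.le).comp (continuous_id.sub continuous_const))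
    exact (continuous_const.mul c1).add (continuous_const.mul c2)
  have hRint : IntervalIntegrable (fun x : ℝ =>
      A0 / (v - u) ^ s * (x * (v - x) ^ s) + B0 / (v - u) ^ s * (x * (x - u) ^ s))
      volume u v := hRcont.intervalIntegrable u v
  have hmono : ∫ x in u..v, x * |f' x| ^ q
      ≤ ∫ x in u..v, (A0 / (v - u) ^ s * (x * (v - x) ^ s)
          + B0 / (v - u) ^ s * (x * (x - u) ^ s)) := by
    refine intervalIntegral.integral_mono_on huv.le hLint hRint ?_
    intro x hx
    have hx0 : 0 < x := lt_of_lt_of_le hu hx.1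
    have e1 : ((v - x) / (v - u)) ^ s = (v - x) ^ s / (v - u) ^ s :=
      Real.div_rpow (by linarith [hx.2] : (0:ℝ) ≤ v - x) hvu.le s
    have e2 : ((x - u) / (v - u)) ^ s = (x - u) ^ s / (v - u) ^ s :=
      Real.div_rpow (by linarith [hx.1] : (0:ℝ) ≤ x - u) hvu.le s
    have := mul_le_mul_of_nonneg_left (hpt x hx) hx0.le
    calc x * |f' x| ^ q
        ≤ x * (((v - x) / (v - u)) ^ s * A0 + ((x - u) / (v - u)) ^ s * B0) := this
      _ = A0 / (v - u) ^ s * (x * (v - x) ^ s) + B0 / (v - u) ^ s * (x * (x - u) ^ s) := by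
          rw [e1, e2]; ring
  -- compute RHS integral
  have c1 : Continuous fun x : ℝ => x * (v - x) ^ s :=
    continuous_id.mul ((Real.continuous_rpow_const hs0.le).comp (continuous_const.sub continuous_id))
  have c2 : Continuous fun x : ℝ => x * (x - u) ^ s :=
    continuous_id.mul ((Real.continuous_rpow_const hs0.le).comp (continuous_id.sub continuous_const))
  have hsplit : ∫ x in u..v, (A0 / (v - u) ^ s * (x * (v - x) ^ s)
        + B0 / (v - u) ^ s * (x * (x - u) ^ s))
      = A0 / (v - u) ^ s * (∫ x in u..v, x * (v - x) ^ s)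
        + B0 / (v - u) ^ s * (∫ x in u..v, x * (x - u) ^ s) := by
    rw [intervalIntegral.integral_add
      (((c1.intervalIntegrable u v)).const_mul _)
      (((c2.intervalIntegrable u v)).const_mul _),
      intervalIntegral.integral_const_mul, intervalIntegral.integral_const_mul]
  rw [hsplit, intA u v s huv hs0, intB u v s huv hs0] at hmono
  refine hmono.trans_eq ?_
  have hw : (0:ℝ) < (v - u) ^ s := Real.rpow_pos_of_pos hvu s
  have e1 : (v - u) ^ (s + 1) = (v - u) ^ s * (v - u) := by
    rw [Real.rpow_add_one hvu.ne']
  have e2 : (v - u) ^ (s + 2) = (v - u) ^ s * (v - u) * (v - u) := by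
    rw [show s + 2 = s + 1 + 1 by ring, Real.rpow_add_one hvu.ne', Real.rpow_add_one hvu.ne']
  rw [e1, e2]
  have hs1' : (0:ℝ) < s + 1 := by linarith
  have hs2' : (0:ℝ) < s + 2 := by linarith
  field_simp
  ring



set_option maxHeartbeats 1000000 in
theorem lemD (f' : ℝ → ℝ) (u v q M : ℝ) (hu : 0 < u) (huv : u < v) (hq : 1 < q)
    (hM : ∀ x ∈ Set.Ioc u v, |f' x| ≤ M)
    (hint : IntervalIntegrable f' MeasureTheory.volume u v) :
    ∫ x in u..v, x * |f' x|
      ≤ ((v ^ 2 - u ^ 2) / 2) ^ (1 - 1 / q)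
        * (∫ x in u..v, x * |f' x| ^ q) ^ (1 / q) := by
  have hq0 : 0 < q := by linarith
  set p := q / (q - 1) with hp
  have hpq : p.HolderConjugate q := (Real.HolderConjugate.conjExponent hq).symm
  have hp1 : 1 < p := hpq.lt
  have hp0 : 0 < p := by linarith
  set ν := volume.restrict (Set.Ioc u v) with hν
  haveI : IsFiniteMeasure ν := by
    constructor
    rw [hν, Measure.restrict_apply_univ]
    exact measure_Ioc_lt_top
  have hmeasf' : AEStronglyMeasurable f' ν := hint.1.aestronglyMeasurable
  set F := fun x : ℝ => x ^ (1 / p) with hF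
  set G := fun x : ℝ => x ^ (1 / q) * |f' x| with hG
  have hFc : Continuous F := Real.continuous_rpow_const (by positivity)
  have hGmeas : AEStronglyMeasurable G ν := by
    have h2 : AEMeasurable (fun x => |f' x|) ν :=
      continuous_abs.measurable.comp_aemeasurable hmeasf'.aemeasurable
    exact (((Real.continuous_rpow_const (by positivity)).measurable.aemeasurable).mul
      h2).aestronglyMeasurable
  have hFmem : MemLp F (ENNReal.ofReal p) ν := by
    refine MemLp.of_bound hFc.aestronglyMeasurable (max 1 (v ^ (1 / p))) ?_
    refine (ae_restrict_iff' measurableSet_Ioc).2 (Filter.Eventually.of_forall ?_)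
    intro x hx
    rw [Real.norm_eq_abs, abs_of_nonneg (Real.rpow_nonneg (le_of_lt (lt_trans hu hx.1)) _)]
    exact le_max_of_le_right (Real.rpow_le_rpow (by linarith [hx.1, hu]) hx.2 (by positivity))
  have hGmem : MemLp G (ENNReal.ofReal q) ν := by
    refine MemLp.of_bound hGmeas (v ^ (1 / q) * max M 0) ?_
    refine (ae_restrict_iff' measurableSet_Ioc).2 (Filter.Eventually.of_forall ?_)
    intro x hx
    have hx0 : 0 < x := lt_trans hu hx.1
    rw [Real.norm_eq_abs, abs_of_nonneg (by positivity)]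
    have h1 : x ^ (1/q) ≤ v ^ (1/q) := Real.rpow_le_rpow hx0.le hx.2 (by positivity)
    have h2 : |f' x| ≤ max M 0 := le_max_of_le_left (hM x hx)
    exact mul_le_mul h1 h2 (abs_nonneg _) (Real.rpow_nonneg (by linarith : (0:ℝ) ≤ v) _)
  have hFnn : 0 ≤ᵐ[ν] F :=
    (ae_restrict_iff' measurableSet_Ioc).2 (Filter.Eventually.of_forall fun x hx =>
      Real.rpow_nonneg (lt_trans hu hx.1).le _)
  have hGnn : 0 ≤ᵐ[ν] G :=
    (ae_restrict_iff' measurableSet_Ioc).2 (Filter.Eventually.of_forall fun x hx =>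
      mul_nonneg (Real.rpow_nonneg (lt_trans hu hx.1).le _) (abs_nonneg _))
  have hH := MeasureTheory.integral_mul_le_Lp_mul_Lq_of_nonneg hpq hFnn hGnn hFmem hGmem
  -- identify the three integrals
  have hFG : ∫ a, F a * G a ∂ν = ∫ x in u..v, x * |f' x| := by
    rw [intervalIntegral.integral_of_le huv.le]
    refine setIntegral_congr_fun measurableSet_Ioc fun x hx => ?_
    have hx0 : 0 < x := lt_trans hu hx.1
    simp only [hF, hG]
    rw [← mul_assoc, ← Real.rpow_add hx0]
    have hone : 1 / p + 1 / q = 1 := by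
      rw [one_div, one_div]; exact hpq.inv_add_inv_eq_one
    rw [hone, Real.rpow_one]
  have hFp : ∫ a, F a ^ p ∂ν = (v ^ 2 - u ^ 2) / 2 := by
    have h1 : ∫ a, F a ^ p ∂ν = ∫ x in u..v, (x:ℝ) := by
      rw [intervalIntegral.integral_of_le huv.le]
      refine setIntegral_congr_fun measurableSet_Ioc fun x hx => ?_
      have hx0 : 0 < x := lt_trans hu hx.1
      simp only [hF]
      rw [← Real.rpow_mul hx0.le, one_div_mul_cancel (ne_of_gt hp0), Real.rpow_one]
    rw [h1, integral_id]
  have hGq : ∫ a, G a ^ q ∂ν = ∫ x in u..v, x * |f' x| ^ q := by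
    rw [intervalIntegral.integral_of_le huv.le]
    refine setIntegral_congr_fun measurableSet_Ioc fun x hx => ?_
    have hx0 : 0 < x := lt_trans hu hx.1
    simp only [hG]
    rw [Real.mul_rpow (Real.rpow_nonneg hx0.le _) (abs_nonneg _),
      ← Real.rpow_mul hx0.le, one_div_mul_cancel (ne_of_gt hq0), Real.rpow_one]
  rw [hFG, hFp, hGq] at hH
  have hpe : 1 / p = 1 - 1 / q := by
    rw [one_div, one_div]
    linarith [hpq.inv_add_inv_eq_one]
  rw [hpe] at hH
  exact hH


set_option maxHeartbeats 1000000 in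
theorem stmt_13 (f f' : ℝ → ℝ) (u v q s : ℝ) (hu : 0 < u) (huv : u < v)
    (hq : 1 ≤ q) (hs0 : 0 < s) (hs1 : s ≤ 1)
    (hderiv : ∀ y ∈ interior (Set.Ici (0:ℝ)), HasDerivAt f (f' y) y)
    (hint : IntervalIntegrable f' MeasureTheory.volume u v)
    (hsconv : ∀ a ∈ Set.Icc u v, ∀ b ∈ Set.Icc u v, ∀ t ∈ Set.Icc (0:ℝ) 1,
      |f' (t * a + (1 - t) * b)| ^ q ≤ t ^ s * |f' a| ^ q + (1 - t) ^ s * |f' b| ^ q) :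
    |(v * f v - u * f u) / (v - u) - (1 / (v - u)) * ∫ μ in u..v, f μ|
      ≤ ((u + v) / 2) ^ (1 - 1 / q) * (1 / ((s + 1) * (s + 2))) ^ (1 / q) *
          (((s + 1) * u + v) * |f' u| ^ q + ((s + 1) * v + u) * |f' v| ^ q) ^ (1 / q) := by
  have hvu : (0:ℝ) < v - u := by linarith
  have hq0 : (0:ℝ) < q := by linarith
  set A0 := |f' u| ^ q with hA0
  set B0 := |f' v| ^ q with hB0
  have hA0n : 0 ≤ A0 := Real.rpow_nonneg (abs_nonneg _) _
  have hB0n : 0 ≤ B0 := Real.rpow_nonneg (abs_nonneg _) _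
  set K := ((s + 1) * u + v) * A0 + ((s + 1) * v + u) * B0 with hK
  set D := (s + 1) * (s + 2) with hD
  have hDpos : (0:ℝ) < D := by rw [hD]; nlinarith
  have hKn : 0 ≤ K := by
    rw [hK]
    have h1 : (0:ℝ) ≤ (s + 1) * u + v := by nlinarith
    have h2 : (0:ℝ) ≤ (s + 1) * v + u := by nlinarith
    positivity
  -- step 1: rewrite via the identity
  have hid : (v * f v - u * f u) / (v - u) - (1 / (v - u)) * ∫ μ in u..v, f μ
      = (∫ x in u..v, x * f' x) / (v - u) := by
    rw [ident f f' u v hu huv hderiv hint]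
    field_simp
  -- step 2: |∫ x f'| ≤ ∫ x |f'|
  have habs : |∫ x in u..v, x * f' x| ≤ ∫ x in u..v, x * |f' x| := by
    refine (intervalIntegral.abs_integral_le_integral_abs huv.le).trans_eq ?_
    refine intervalIntegral.integral_congr fun x hx => ?_
    rw [Set.uIcc_of_le huv.le] at hx
    have hx0 : 0 < x := lt_of_lt_of_le hu hx.1
    rw [abs_mul, abs_of_pos hx0]
  -- bound on |f'|^q, hence on |f'|
  have hfq : ∀ x ∈ Set.Icc u v, |f' x| ^ q ≤ A0 + B0 := by
    intro x hx
    have ht : (v - x) / (v - u) ∈ Set.Icc (0:ℝ) 1 := by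
      constructor
      · exact div_nonneg (by linarith [hx.2]) hvu.le
      · rw [div_le_one hvu]; linarith [hx.1]
    have h := hsconv u ⟨le_refl u, huv.le⟩ v ⟨huv.le, le_refl v⟩ _ ht
    have e1 : (v - x) / (v - u) * u + (1 - (v - x) / (v - u)) * v = x := by
      field_simp; ring
    rw [e1] at h
    have h1 : ((v - x) / (v - u)) ^ s ≤ 1 := Real.rpow_le_one ht.1 ht.2 hs0.le
    have h2 : (1 - (v - x) / (v - u)) ^ s ≤ 1 :=
      Real.rpow_le_one (by linarith [ht.2]) (by linarith [ht.1]) hs0.le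
    nlinarith [Real.rpow_nonneg ht.1 s,
      Real.rpow_nonneg (show (0:ℝ) ≤ 1 - (v - x) / (v - u) by linarith [ht.2]) s]
  have hM : ∀ x ∈ Set.Ioc u v, |f' x| ≤ (A0 + B0) ^ (1 / q) := by
    intro x hx
    have hxI : x ∈ Set.Icc u v := ⟨hx.1.le, hx.2⟩
    have h1 : |f' x| = (|f' x| ^ q) ^ (1 / q) := by
      rw [← Real.rpow_mul (abs_nonneg _), mul_one_div_cancel hq0.ne', Real.rpow_one]
    rw [h1]
    exact Real.rpow_le_rpow (Real.rpow_nonneg (abs_nonneg _) _) (hfq x hxI) (by positivity)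
  -- lemC bound
  have hC : ∫ x in u..v, x * |f' x| ^ q ≤ (v - u) * K / D :=
    lemC f' u v q s hu huv hq hs0 hint hsconv
  have hCnn : 0 ≤ ∫ x in u..v, x * |f' x| ^ q := by
    refine intervalIntegral.integral_nonneg huv.le fun x hx => ?_
    have hx0 : 0 < x := lt_of_lt_of_le hu hx.1
    positivity
  rw [hid, abs_div, abs_of_pos hvu]
  rcases eq_or_lt_of_le hq with hq1 | hq1
  · -- q = 1
    subst hq1
    have heq : ∫ x in u..v, x * |f' x| = ∫ x in u..v, x * |f' x| ^ (1:ℝ) := by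
      refine intervalIntegral.integral_congr fun x hx => ?_
      rw [Real.rpow_one]
    have hle : |∫ x in u..v, x * f' x| / (v - u) ≤ K / D := by
      rw [div_le_iff₀ hvu]
      calc |∫ x in u..v, x * f' x| ≤ ∫ x in u..v, x * |f' x| := habs
        _ = ∫ x in u..v, x * |f' x| ^ (1:ℝ) := heq
        _ ≤ (v - u) * K / D := hC
        _ = K / D * (v - u) := by ring
    refine hle.trans_eq ?_
    norm_num
    ring
  · -- q > 1
    have hD1 := lemD f' u v q ((A0 + B0) ^ (1 / q)) hu huv hq1 hM hint
    have hstep : |∫ x in u..v, x * f' x|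
        ≤ ((v ^ 2 - u ^ 2) / 2) ^ (1 - 1/q) * ((v - u) * K / D) ^ (1/q) := by
      refine (habs.trans hD1).trans ?_
      have h1 : (0:ℝ) ≤ (v ^ 2 - u ^ 2) / 2 := by nlinarith
      refine mul_le_mul_of_nonneg_left ?_ (Real.rpow_nonneg h1 _)
      exact Real.rpow_le_rpow hCnn hC (by positivity)
    have hfin : ((v ^ 2 - u ^ 2) / 2) ^ (1 - 1/q) * ((v - u) * K / D) ^ (1/q)
        = (v - u) * (((u + v) / 2) ^ (1 - 1/q) * (1 / D) ^ (1/q) * K ^ (1/q)) := by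
      have e0 : (v ^ 2 - u ^ 2) / 2 = (v - u) * ((u + v) / 2) := by ring
      have e1 : (v - u) * K / D = (v - u) * (1 / D * K) := by ring
      have hA : (0:ℝ) ≤ (u + v) / 2 := by linarith
      rw [e0, e1, Real.mul_rpow hvu.le hA,
        Real.mul_rpow hvu.le (mul_nonneg (by positivity) hKn),
        Real.mul_rpow (by positivity : (0:ℝ) ≤ 1 / D) hKn]
      have e2 : (v - u) ^ (1 - 1/q) * (v - u) ^ (1/q) = v - u := by
        rw [← Real.rpow_add hvu]
        norm_num
      calc (v - u) ^ (1 - 1/q) * ((u + v) / 2) ^ (1 - 1/q)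
            * ((v - u) ^ (1/q) * ((1 / D) ^ (1/q) * K ^ (1/q)))
          = ((v - u) ^ (1 - 1/q) * (v - u) ^ (1/q))
            * (((u + v) / 2) ^ (1 - 1/q) * ((1 / D) ^ (1/q) * K ^ (1/q))) := by ring
        _ = (v - u) * (((u + v) / 2) ^ (1 - 1/q) * (1 / D) ^ (1/q) * K ^ (1/q)) := by
            rw [e2]; ring
    rw [div_le_iff₀ hvu]
    refine hstep.trans_eq ?_
    rw [hfin]; ring
end

section
/- Let J = [0,∞) and let f : J → ℝ be differentiable on the interior of J with f' integrable on [u,v], where u, v ∈ J and 0 < u < v. Let q ≥ 1 and s ∈ (0,1]. If |f'|^q is s-convex in the second sense on [u,v], then |(v·f(v) - u·f(u))/(2(v-u)) + (1/2)·f((u+v)/2) - (1/(v-u))·∫_u^v f(μ) dμ| ≤ (1/4)·A(u,v)^{1-1/q}·(1/((s+1)(s+2)))^{1/q}·[(((s+1)u+v)·|f'((u+v)/2)|^q + ((s+1)v+u)·|f'(v)|^q)^{1/q} + (((s+1)v+u)·|f'((u+v)/2)|^q + ((s+1)u+v)·|f'(u)|^q)^{1/q}]. -/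
open MeasureTheory intervalIntegral

lemma weighted_holder {a b q Cg : ℝ} (hq : 1 ≤ q)
    {w g : ℝ → ℝ} (hw : ∀ x ∈ Set.Ioc a b, 0 ≤ w x) (hwc : Continuous w)
    (hg : ∀ x, 0 ≤ g x)
    (hgm : AEStronglyMeasurable g (volume.restrict (Set.Ioc a b)))
    (hgb : ∀ x ∈ Set.Ioc a b, g x ≤ Cg) :
    ∫ x in Set.Ioc a b, w x * g x ≤
      (∫ x in Set.Ioc a b, w x) ^ (1 - 1/q) * (∫ x in Set.Ioc a b, w x * g x ^ q) ^ (1/q) := by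
  rcases eq_or_lt_of_le hq with rfl | hq1
  · simp only [one_div, inv_one, sub_self, Real.rpow_zero, Real.rpow_one, one_mul]
    exact le_rfl
  set M := volume.restrict (Set.Ioc a b) with hM
  haveI : IsFiniteMeasure M := by
    rw [hM]
    exact ⟨by rw [Measure.restrict_apply_univ]; exact measure_Ioc_lt_top⟩
  set p : ℝ := q / (q - 1) with hp
  have hq0 : (0:ℝ) < q := lt_trans zero_lt_one hq1
  have hq1' : q - 1 ≠ 0 := ne_of_gt (by linarith)
  have hpq : p.HolderConjugate q := by
    exact ((Real.holderConjugate_iff_eq_conjExponent hq1).mpr rfl).symm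
  have hip : 1/p = 1 - 1/q := by rw [hp]; field_simp
  obtain ⟨Cw, hCw⟩ : ∃ Cw, ∀ x ∈ Set.Ioc a b, w x ≤ Cw := by
    obtain ⟨Cw, hCw⟩ := (isCompact_Icc (a := a) (b := b)).exists_bound_of_continuousOn hwc.continuousOn
    exact ⟨Cw, fun x hx => le_trans (le_abs_self _) (by simpa using hCw x (Set.Ioc_subset_Icc_self hx))⟩
  have hmono : ∀ (P : ℝ → Prop), (∀ x ∈ Set.Ioc a b, P x) → ∀ᵐ x ∂M, P x := by
    intro P hP
    rw [hM, ae_restrict_iff' measurableSet_Ioc]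
    exact ae_of_all _ hP
  set F : ℝ → ℝ := fun x => w x ^ (1/p) with hF
  set G : ℝ → ℝ := fun x => w x ^ (1/q) * g x with hG
  have hFm : MemLp F (ENNReal.ofReal p) M := by
    refine MemLp.of_bound ((hwc.rpow_const (fun x => Or.inr hpq.one_div_nonneg)).aestronglyMeasurable) (|Cw| ^ (1/p)) ?_
    refine hmono _ fun x hx => ?_
    rw [Real.norm_of_nonneg (Real.rpow_nonneg (hw x hx) _)]
    exact Real.rpow_le_rpow (hw x hx) (le_trans (hCw x hx) (le_abs_self _)) hpq.one_div_nonneg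
  have hGm : MemLp G (ENNReal.ofReal q) M := by
    refine MemLp.of_bound (((hwc.rpow_const (fun x => Or.inr hpq.symm.one_div_nonneg)).aestronglyMeasurable).mul hgm) (|Cw| ^ (1/q) * (|Cg| + 1)) ?_
    refine hmono _ fun x hx => ?_
    rw [Real.norm_of_nonneg (mul_nonneg (Real.rpow_nonneg (hw x hx) _) (hg x))]
    have h1 : w x ^ (1/q) ≤ |Cw| ^ (1/q) :=
      Real.rpow_le_rpow (hw x hx) (le_trans (hCw x hx) (le_abs_self _)) hpq.symm.one_div_nonneg
    have h2 : g x ≤ |Cg| + 1 := le_trans (hgb x hx) (by linarith [le_abs_self Cg])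
    exact mul_le_mul h1 h2 (hg x) (Real.rpow_nonneg (abs_nonneg _) _)
  have key := integral_mul_le_Lp_mul_Lq_of_nonneg hpq
    (hmono _ fun x hx => Real.rpow_nonneg (hw x hx) _)
    (hmono _ fun x hx => mul_nonneg (Real.rpow_nonneg (hw x hx) _) (hg x)) hFm hGm
  have e1 : ∀ᵐ x ∂M, F x * G x = w x * g x := by
    refine hmono _ fun x hx => ?_
    show w x ^ (1/p) * (w x ^ (1/q) * g x) = w x * g x
    rw [← mul_assoc, ← Real.rpow_add' (hw x hx) (by rw [hip]; ring_nf; positivity), hip]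
    norm_num
  have e2 : ∀ᵐ x ∂M, F x ^ p = w x := by
    refine hmono _ fun x hx => ?_
    show (w x ^ (1/p)) ^ p = w x
    rw [← Real.rpow_mul (hw x hx), one_div, inv_mul_cancel₀ hpq.ne_zero, Real.rpow_one]
  have e3 : ∀ᵐ x ∂M, G x ^ q = w x * g x ^ q := by
    refine hmono _ fun x hx => ?_
    show (w x ^ (1/q) * g x) ^ q = w x * g x ^ q
    rw [Real.mul_rpow (Real.rpow_nonneg (hw x hx) _) (hg x), ← Real.rpow_mul (hw x hx),
      one_div, inv_mul_cancel₀ hpq.symm.ne_zero, Real.rpow_one]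
  rw [show (1:ℝ) - 1/q = 1/p from hip.symm]
  refine le_trans (le_of_eq (integral_congr_ae (e1.mono fun x h => h.symm))) (le_trans key (le_of_eq ?_))
  congr 1
  · congr 1
    exact integral_congr_ae e2
  · congr 1
    exact integral_congr_ae e3

-- integral computation lemmas
lemma int_K1 {a b c s : ℝ} (hab : a < b) (hs0 : 0 < s) :
    ∫ μ in a..b, (μ - c) * ((μ - a)/(b - a))^s
      = (b-a)^2/(s+2) + (a-c)*(b-a)/(s+1) := by
  have hL : (0:ℝ) < b - a := by linarith
  have hLs : (0:ℝ) < (b-a)^s := Real.rpow_pos_of_pos hL s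
  have hrs : Continuous (fun x : ℝ => x ^ s) := Real.continuous_rpow_const hs0.le
  have huIcc : Set.uIcc a b = Set.Icc a b := Set.uIcc_of_le hab.le
  have base : ∫ μ in a..b, (μ - c) * ((μ - a)/(b - a))^s
      = ∫ μ in a..b, (fun x => (x + (a-c)) * x ^ s / (b-a)^s) (μ - a) := by
    refine intervalIntegral.integral_congr fun μ hμ => ?_
    rw [huIcc] at hμ
    have h1 : (0:ℝ) ≤ μ - a := by linarith [hμ.1]
    show (μ - c) * ((μ - a)/(b - a))^s = ((μ - a) + (a - c)) * (μ - a) ^ s / (b-a)^s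
    rw [Real.div_rpow h1 hL.le, show μ - c = (μ - a) + (a - c) by ring, mul_div_assoc]
  rw [base, intervalIntegral.integral_comp_sub_right (fun x => (x + (a-c)) * x ^ s / (b-a)^s) a,
    sub_self]
  have i1 : ∫ x in (0:ℝ)..(b - a), x * x ^ s = (b-a)^(s+2)/(s+2) := by
    have e : ∫ x in (0:ℝ)..(b - a), x * x ^ s = ∫ x in (0:ℝ)..(b - a), x ^ (s+1) := by
      refine intervalIntegral.integral_congr fun x hx => ?_
      rw [Set.uIcc_of_le hL.le] at hx
      rw [Real.rpow_add' hx.1 (by positivity), Real.rpow_one, mul_comm]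
    rw [e, integral_rpow (Or.inl (by linarith)), Real.zero_rpow (by positivity),
      show s + 1 + 1 = s + 2 by ring, sub_zero]
  have i2 : ∫ x in (0:ℝ)..(b - a), x ^ s = (b-a)^(s+1)/(s+1) := by
    rw [integral_rpow (Or.inl (by linarith)), Real.zero_rpow (by positivity), sub_zero]
  have isplit : ∫ x in (0:ℝ)..(b - a), (x + (a-c)) * x ^ s / (b-a)^s
      = ((∫ x in (0:ℝ)..(b - a), x * x ^ s) + (a-c) * ∫ x in (0:ℝ)..(b - a), x ^ s) / (b-a)^s := by
    rw [intervalIntegral.integral_div]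
    congr 1
    have ci1 : IntervalIntegrable (fun x : ℝ => x * x ^ s) volume 0 (b-a) :=
      (continuous_id.mul hrs).intervalIntegrable _ _
    have ci2 : IntervalIntegrable (fun x : ℝ => (a-c) * x ^ s) volume 0 (b-a) :=
      (continuous_const.mul hrs).intervalIntegrable _ _
    rw [← intervalIntegral.integral_const_mul, ← intervalIntegral.integral_add ci1 ci2]
    refine intervalIntegral.integral_congr fun x hx => ?_
    ring
  rw [isplit, i1, i2]
  have eL2 : (b-a)^(s+2) = (b-a)^s * (b-a)^2 := by
    rw [Real.rpow_add hL, Real.rpow_two]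
  have eL1 : (b-a)^(s+1) = (b-a)^s * (b-a) := by
    rw [Real.rpow_add hL, Real.rpow_one]
  rw [eL2, eL1]
  have h1 : s + 1 ≠ 0 := by positivity
  have h2 : s + 2 ≠ 0 := by positivity
  field_simp

lemma int_K2 {a b c s : ℝ} (hab : a < b) (hs0 : 0 < s) :
    ∫ μ in a..b, (μ - c) * ((b - μ)/(b - a))^s
      = (b-c)*(b-a)/(s+1) - (b-a)^2/(s+2) := by
  have hL : (0:ℝ) < b - a := by linarith
  have hLs : (0:ℝ) < (b-a)^s := Real.rpow_pos_of_pos hL s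
  have hrs : Continuous (fun x : ℝ => x ^ s) := Real.continuous_rpow_const hs0.le
  have huIcc : Set.uIcc a b = Set.Icc a b := Set.uIcc_of_le hab.le
  have base : ∫ μ in a..b, (μ - c) * ((b - μ)/(b - a))^s
      = ∫ μ in a..b, (fun x => ((b - c) - x) * x ^ s / (b-a)^s) (b - μ) := by
    refine intervalIntegral.integral_congr fun μ hμ => ?_
    rw [huIcc] at hμ
    have h1 : (0:ℝ) ≤ b - μ := by linarith [hμ.2]
    show (μ - c) * ((b - μ)/(b - a))^s = ((b - c) - (b - μ)) * (b - μ) ^ s / (b-a)^s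
    rw [Real.div_rpow h1 hL.le, show μ - c = (b - c) - (b - μ) by ring, mul_div_assoc]
  rw [base, intervalIntegral.integral_comp_sub_left (fun x => ((b - c) - x) * x ^ s / (b-a)^s) b,
    sub_self]
  have i1 : ∫ x in (0:ℝ)..(b - a), x * x ^ s = (b-a)^(s+2)/(s+2) := by
    have e : ∫ x in (0:ℝ)..(b - a), x * x ^ s = ∫ x in (0:ℝ)..(b - a), x ^ (s+1) := by
      refine intervalIntegral.integral_congr fun x hx => ?_
      rw [Set.uIcc_of_le hL.le] at hx
      rw [Real.rpow_add' hx.1 (by positivity), Real.rpow_one, mul_comm]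
    rw [e, integral_rpow (Or.inl (by linarith)), Real.zero_rpow (by positivity),
      show s + 1 + 1 = s + 2 by ring, sub_zero]
  have i2 : ∫ x in (0:ℝ)..(b - a), x ^ s = (b-a)^(s+1)/(s+1) := by
    rw [integral_rpow (Or.inl (by linarith)), Real.zero_rpow (by positivity), sub_zero]
  have isplit : ∫ x in (0:ℝ)..(b - a), ((b - c) - x) * x ^ s / (b-a)^s
      = ((b-c) * (∫ x in (0:ℝ)..(b - a), x ^ s) - ∫ x in (0:ℝ)..(b - a), x * x ^ s) / (b-a)^s := by
    rw [intervalIntegral.integral_div]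
    congr 1
    have ci1 : IntervalIntegrable (fun x : ℝ => (b-c) * x ^ s) volume 0 (b-a) :=
      (continuous_const.mul hrs).intervalIntegrable _ _
    have ci2 : IntervalIntegrable (fun x : ℝ => x * x ^ s) volume 0 (b-a) :=
      (continuous_id.mul hrs).intervalIntegrable _ _
    rw [← intervalIntegral.integral_const_mul, ← intervalIntegral.integral_sub ci1 ci2]
    refine intervalIntegral.integral_congr fun x hx => ?_
    ring
  rw [isplit, i1, i2]
  have eL2 : (b-a)^(s+2) = (b-a)^s * (b-a)^2 := by
    rw [Real.rpow_add hL, Real.rpow_two]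
  have eL1 : (b-a)^(s+1) = (b-a)^s * (b-a) := by
    rw [Real.rpow_add hL, Real.rpow_one]
  rw [eL2, eL1]
  have h1 : s + 1 ≠ 0 := by positivity
  have h2 : s + 2 ≠ 0 := by positivity
  field_simp

lemma int_K0 {a b c : ℝ} : ∫ μ in a..b, (μ - c) = (b-a)*((a+b)/2 - c) := by
  rw [intervalIntegral.integral_sub intervalIntegrable_id (intervalIntegrable_const),
    integral_id, intervalIntegral.integral_const, smul_eq_mul]
  ring

lemma branch_bound {g' : ℝ → ℝ} {a b c q s A B : ℝ}
    (hca : c ≤ a) (hab : a < b) (hq : 1 ≤ q) (hs0 : 0 < s)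
    (hA : 0 ≤ A) (hB : 0 ≤ B)
    (hgint : IntervalIntegrable g' volume a b)
    (hbound : ∀ μ ∈ Set.Icc a b,
      |g' μ| ^ q ≤ ((μ - a)/(b - a))^s * A + ((b - μ)/(b - a))^s * B) :
    |∫ μ in a..b, (μ - c) * g' μ| ≤
      ((b - a) * ((a + b)/2 - c)) ^ (1 - 1/q) *
      (((b-a)^2/(s+2) + (a-c)*(b-a)/(s+1)) * A
        + ((b-c)*(b-a)/(s+1) - (b-a)^2/(s+2)) * B) ^ (1/q) := by
  have hq0 : (0:ℝ) < q := lt_of_lt_of_le zero_lt_one hq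
  have hL : (0:ℝ) < b - a := by linarith
  have hrs : Continuous (fun x : ℝ => x ^ s) := Real.continuous_rpow_const hs0.le
  have huIcc : Set.uIcc a b = Set.Icc a b := Set.uIcc_of_le hab.le
  -- Step 1
  have step1 : |∫ μ in a..b, (μ - c) * g' μ| ≤ ∫ μ in a..b, (μ - c) * |g' μ| := by
    refine le_trans (intervalIntegral.abs_integral_le_integral_abs hab.le) (le_of_eq ?_)
    refine intervalIntegral.integral_congr fun μ hμ => ?_
    rw [huIcc] at hμ
    rw [abs_mul, abs_of_nonneg (by linarith [hμ.1] : (0:ℝ) ≤ μ - c)]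
  -- pointwise bounds
  have hABq : ∀ μ ∈ Set.Icc a b, |g' μ| ^ q ≤ A + B := by
    intro μ hμ
    have h1 : ((μ - a)/(b - a)) ^ s ≤ 1 :=
      Real.rpow_le_one (div_nonneg (by linarith [hμ.1]) hL.le)
        (by rw [div_le_one hL]; linarith [hμ.2]) hs0.le
    have h2 : ((b - μ)/(b - a)) ^ s ≤ 1 :=
      Real.rpow_le_one (div_nonneg (by linarith [hμ.2]) hL.le)
        (by rw [div_le_one hL]; linarith [hμ.1]) hs0.le
    calc |g' μ| ^ q ≤ ((μ - a)/(b - a))^s * A + ((b - μ)/(b - a))^s * B := hbound μ hμ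
    _ ≤ 1 * A + 1 * B := by gcongr
    _ = A + B := by ring
  have habs : ∀ μ ∈ Set.Icc a b, |g' μ| ≤ (A + B) ^ (1/q) := by
    intro μ hμ
    calc |g' μ| = (|g' μ| ^ q) ^ (1/q) := by
          rw [one_div, Real.rpow_rpow_inv (abs_nonneg _) hq0.ne']
    _ ≤ (A + B) ^ (1/q) :=
        Real.rpow_le_rpow (Real.rpow_nonneg (abs_nonneg _) _) (hABq μ hμ) (by positivity)
  -- measurability
  have hgm : AEStronglyMeasurable (fun μ => |g' μ|) (volume.restrict (Set.Ioc a b)) :=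
    (hgint.1.aestronglyMeasurable.norm).congr (ae_of_all _ fun x => (Real.norm_eq_abs (g' x)))
  -- Step 2: Hölder
  have step2 : ∫ μ in a..b, (μ - c) * |g' μ| ≤
      (∫ μ in a..b, (μ - c)) ^ (1 - 1/q) * (∫ μ in a..b, (μ - c) * |g' μ| ^ q) ^ (1/q) := by
    rw [intervalIntegral.integral_of_le hab.le, intervalIntegral.integral_of_le hab.le,
      intervalIntegral.integral_of_le hab.le]
    exact weighted_holder hq (fun x hx => by linarith [hx.1]) (by continuity)
      (fun x => abs_nonneg _) hgm (fun x hx => habs x (Set.Ioc_subset_Icc_self hx))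
  -- Step 3: s-convexity bound
  haveI : IsFiniteMeasure (volume.restrict (Set.Ioc a b)) :=
    ⟨by rw [Measure.restrict_apply_univ]; exact measure_Ioc_lt_top⟩
  have hq_pow_meas : AEStronglyMeasurable (fun μ => |g' μ| ^ q)
      (volume.restrict (Set.Ioc a b)) :=
    (Real.continuous_rpow_const hq0.le).comp_aestronglyMeasurable hgm
  have intL : IntervalIntegrable (fun μ => (μ - c) * |g' μ| ^ q) volume a b := by
    rw [intervalIntegrable_iff_integrableOn_Ioc_of_le hab.le]
    refine memLp_one_iff_integrable.mp (MemLp.of_bound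
      (((continuous_id.sub continuous_const).aestronglyMeasurable).mul hq_pow_meas)
      ((b - c) * (A + B)) ?_)
    rw [ae_restrict_iff' measurableSet_Ioc]
    refine ae_of_all _ fun μ hμ => ?_
    have h1 : (0:ℝ) ≤ μ - c := by linarith [hμ.1]
    rw [Real.norm_of_nonneg (mul_nonneg h1 (Real.rpow_nonneg (abs_nonneg _) _))]
    exact mul_le_mul (by linarith [hμ.2]) (hABq μ (Set.Ioc_subset_Icc_self hμ))
      (Real.rpow_nonneg (abs_nonneg _) _) (by linarith)
  have c1 : Continuous fun μ : ℝ => ((μ - a)/(b-a))^s :=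
    hrs.comp ((continuous_id.sub continuous_const).div_const _)
  have c2 : Continuous fun μ : ℝ => ((b - μ)/(b-a))^s :=
    hrs.comp ((continuous_const.sub continuous_id).div_const _)
  have intR : IntervalIntegrable
      (fun μ => (μ - c) * (((μ-a)/(b-a))^s * A + ((b-μ)/(b-a))^s * B)) volume a b :=
    ((continuous_id.sub continuous_const).mul
      ((c1.mul continuous_const).add (c2.mul continuous_const))).intervalIntegrable _ _
  have step3 : ∫ μ in a..b, (μ - c) * |g' μ| ^ q ≤
      ((b-a)^2/(s+2) + (a-c)*(b-a)/(s+1)) * A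
        + ((b-c)*(b-a)/(s+1) - (b-a)^2/(s+2)) * B := by
    have mono := intervalIntegral.integral_mono_on hab.le intL intR
      (fun μ hμ => mul_le_mul_of_nonneg_left (hbound μ hμ) (by linarith [hμ.1]))
    refine le_trans mono (le_of_eq ?_)
    have iA : IntervalIntegrable (fun μ : ℝ => (μ - c) * ((μ-a)/(b-a))^s * A) volume a b :=
      (((continuous_id.sub continuous_const).mul c1).mul continuous_const).intervalIntegrable _ _
    have iB : IntervalIntegrable (fun μ : ℝ => (μ - c) * ((b-μ)/(b-a))^s * B) volume a b :=
      (((continuous_id.sub continuous_const).mul c2).mul continuous_const).intervalIntegrable _ _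
    have split : ∫ μ in a..b, (μ - c) * (((μ-a)/(b-a))^s * A + ((b-μ)/(b-a))^s * B)
        = (∫ μ in a..b, (μ - c) * ((μ-a)/(b-a))^s) * A
          + (∫ μ in a..b, (μ - c) * ((b-μ)/(b-a))^s) * B := by
      rw [← intervalIntegral.integral_mul_const, ← intervalIntegral.integral_mul_const,
        ← intervalIntegral.integral_add iA iB]
      exact intervalIntegral.integral_congr fun μ _ => by ring
    rw [split, int_K1 hab hs0, int_K2 hab hs0]
  -- combine
  have h0 : (0:ℝ) ≤ ∫ μ in a..b, (μ - c) * |g' μ| ^ q :=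
    intervalIntegral.integral_nonneg hab.le
      (fun μ hμ => mul_nonneg (by linarith [hμ.1]) (Real.rpow_nonneg (abs_nonneg _) _))
  refine le_trans step1 (le_trans step2 ?_)
  rw [int_K0]
  exact mul_le_mul_of_nonneg_left (Real.rpow_le_rpow h0 step3 (by positivity))
    (Real.rpow_nonneg (mul_nonneg hL.le (by linarith)) _)

set_option maxHeartbeats 1000000 in
theorem stmt_14 (f f' : ℝ → ℝ) (u v q s : ℝ) (hu : 0 < u) (huv : u < v)
    (hq : 1 ≤ q) (hs0 : 0 < s) (hs1 : s ≤ 1)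
    (hderiv : ∀ y ∈ interior (Set.Ici (0:ℝ)), HasDerivAt f (f' y) y)
    (hint : IntervalIntegrable f' MeasureTheory.volume u v)
    (hsconv : ∀ a ∈ Set.Icc u v, ∀ b ∈ Set.Icc u v, ∀ t ∈ Set.Icc (0:ℝ) 1,
      |f' (t * a + (1 - t) * b)| ^ q ≤ t ^ s * |f' a| ^ q + (1 - t) ^ s * |f' b| ^ q) :
    |(v * f v - u * f u) / (2 * (v - u)) + (1 / 2) * f ((u + v) / 2)
        - (1 / (v - u)) * ∫ μ in u..v, f μ|
      ≤ (1 / 4) * ((u + v) / 2) ^ (1 - 1 / q) * (1 / ((s + 1) * (s + 2))) ^ (1 / q) *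
          ((((s + 1) * u + v) * |f' ((u + v) / 2)| ^ q
              + ((s + 1) * v + u) * |f' v| ^ q) ^ (1 / q)
            + (((s + 1) * v + u) * |f' ((u + v) / 2)| ^ q
              + ((s + 1) * u + v) * |f' u| ^ q) ^ (1 / q)) := by
  set m : ℝ := (u + v) / 2 with hm
  have hum : u < m := by rw [hm]; linarith
  have hmv : m < v := by rw [hm]; linarith
  have hm0 : (0:ℝ) < m := by rw [hm]; linarith
  have hvu' : (0:ℝ) < v - u := by linarith
  have hvu : v - u ≠ 0 := hvu'.ne'
  have hvu0 : (0:ℝ) < 1 / (v - u) := by positivity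
  have hq0 : (0:ℝ) < q := lt_of_lt_of_le zero_lt_one hq
  have huIccuv : Set.uIcc u v = Set.Icc u v := Set.uIcc_of_le huv.le
  have hderiv' : ∀ y ∈ Set.Icc u v, HasDerivAt f (f' y) y := fun y hy =>
    hderiv y (by rw [interior_Ici]; exact lt_of_lt_of_le hu hy.1)
  have hsub1 : Set.uIcc u m ⊆ Set.uIcc u v := by
    rw [huIccuv, Set.uIcc_of_le hum.le]
    exact Set.Icc_subset_Icc le_rfl hmv.le
  have hsub2 : Set.uIcc m v ⊆ Set.uIcc u v := by
    rw [huIccuv, Set.uIcc_of_le hmv.le]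
    exact Set.Icc_subset_Icc hum.le le_rfl
  have hint1 : IntervalIntegrable f' volume u m := hint.mono_set hsub1
  have hint2 : IntervalIntegrable f' volume m v := hint.mono_set hsub2
  have hxint : IntervalIntegrable (fun x => x * f' x) volume u v :=
    hint.continuousOn_mul continuousOn_id
  have hx1 : IntervalIntegrable (fun x => x * f' x) volume u m := hxint.mono_set hsub1
  have hx2 : IntervalIntegrable (fun x => x * f' x) volume m v := hxint.mono_set hsub2
  have hfc : ContinuousOn f (Set.Icc u v) := fun x hx =>
    ((hderiv' x hx).continuousAt).continuousWithinAt
  have hint_f : IntervalIntegrable f volume u v := by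
    apply ContinuousOn.intervalIntegrable
    rwa [huIccuv]
  have E1 : ∫ y in u..m, f' y = f m - f u :=
    intervalIntegral.integral_eq_sub_of_hasDerivAt
      (fun x hx => hderiv' x (by rw [← huIccuv]; exact hsub1 hx)) hint1
  have E2 : ∫ y in m..v, f' y = f v - f m :=
    intervalIntegral.integral_eq_sub_of_hasDerivAt
      (fun x hx => hderiv' x (by rw [← huIccuv]; exact hsub2 hx)) hint2
  have E3 : ∫ x in u..v, x * f' x = v * f v - u * f u - ∫ x in u..v, f x := by
    have := intervalIntegral.integral_mul_deriv_eq_deriv_mul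
      (u := fun x => x) (u' := fun _ => (1:ℝ)) (v := f) (v' := f')
      (fun x _ => hasDerivAt_id x)
      (fun x hx => hderiv' x (by rwa [huIccuv] at hx))
      intervalIntegrable_const hint
    simpa using this
  set I1 : ℝ := ∫ μ in u..m, (μ - u/2) * f' μ with hI1
  set I2 : ℝ := ∫ μ in m..v, (μ - v/2) * f' μ with hI2
  have d1 : I1 = (∫ x in u..m, x * f' x) - (u/2) * ∫ x in u..m, f' x := by
    rw [hI1, ← intervalIntegral.integral_const_mul,
      ← intervalIntegral.integral_sub hx1 (hint1.const_mul _)]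
    exact intervalIntegral.integral_congr fun μ _ => by ring
  have d2 : I2 = (∫ x in m..v, x * f' x) - (v/2) * ∫ x in m..v, f' x := by
    rw [hI2, ← intervalIntegral.integral_const_mul,
      ← intervalIntegral.integral_sub hx2 (hint2.const_mul _)]
    exact intervalIntegral.integral_congr fun μ _ => by ring
  have dsum : (∫ x in u..m, x * f' x) + (∫ x in m..v, x * f' x) = ∫ x in u..v, x * f' x :=
    intervalIntegral.integral_add_adjacent_intervals hx1 hx2
  have XY := dsum.trans E3
  have rhs_eq : I1 + I2 = (v * f v - u * f u)/2 + (v-u)/2 * f m - ∫ μ in u..v, f μ := by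
    rw [d1, d2, E1, E2]
    linear_combination XY
  have identity : (v * f v - u * f u) / (2 * (v - u)) + (1 / 2) * f m
      - (1 / (v - u)) * ∫ μ in u..v, f μ = (I1 + I2) * (1/(v-u)) := by
    rw [rhs_eq]
    field_simp
  -- s-convexity pointwise bounds
  have hbound1 : ∀ μ ∈ Set.Icc u m,
      |f' μ| ^ q ≤ ((μ - u)/(m - u))^s * |f' m| ^ q + ((m - μ)/(m - u))^s * |f' u| ^ q := by
    intro μ hμ
    have hmu : (0:ℝ) < m - u := by linarith
    set t := (μ - u)/(m - u) with ht'
    have ht : t ∈ Set.Icc (0:ℝ) 1 :=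
      ⟨div_nonneg (by linarith [hμ.1]) hmu.le,
       by rw [ht', div_le_one hmu]; linarith [hμ.2]⟩
    have harg : t * m + (1 - t) * u = μ := by rw [ht']; field_simp; ring
    have h1t : 1 - t = (m - μ)/(m - u) := by rw [ht']; field_simp; ring
    have hs := hsconv m ⟨hum.le, hmv.le⟩ u ⟨le_refl u, huv.le⟩ t ht
    rw [harg, h1t] at hs
    exact hs
  have hbound2 : ∀ μ ∈ Set.Icc m v,
      |f' μ| ^ q ≤ ((μ - m)/(v - m))^s * |f' v| ^ q + ((v - μ)/(v - m))^s * |f' m| ^ q := by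
    intro μ hμ
    have hvm : (0:ℝ) < v - m := by linarith
    set t := (μ - m)/(v - m) with ht'
    have ht : t ∈ Set.Icc (0:ℝ) 1 :=
      ⟨div_nonneg (by linarith [hμ.1]) hvm.le,
       by rw [ht', div_le_one hvm]; linarith [hμ.2]⟩
    have harg : t * v + (1 - t) * m = μ := by rw [ht']; field_simp; ring
    have h1t : 1 - t = (v - μ)/(v - m) := by rw [ht']; field_simp; ring
    have hs := hsconv v ⟨huv.le, le_refl v⟩ m ⟨hum.le, hmv.le⟩ t ht
    rw [harg, h1t] at hs
    exact hs
  have hAm : (0:ℝ) ≤ |f' m| ^ q := Real.rpow_nonneg (abs_nonneg _) _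
  have hAu : (0:ℝ) ≤ |f' u| ^ q := Real.rpow_nonneg (abs_nonneg _) _
  have hAv : (0:ℝ) ≤ |f' v| ^ q := Real.rpow_nonneg (abs_nonneg _) _
  have b1 := branch_bound (by linarith : u/2 ≤ u) hum hq hs0 hAm hAu hint1 hbound1
  have b2 := branch_bound (by linarith : v/2 ≤ m) hmv hq hs0 hAv hAm hint2 hbound2
  rw [← hI1] at b1
  rw [← hI2] at b2
  set D : ℝ := (s+1)*(s+2) with hD'
  have hD : (0:ℝ) < D := by rw [hD']; positivity
  have r1 : (m - u) * ((u + m)/2 - u/2) = ((v-u)/4) * m := by rw [hm]; ring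
  have r2 : (m-u)^2/(s+2) + (u - u/2)*(m-u)/(s+1) = ((v-u)/(4*D))*((s+1)*v+u) := by
    rw [hD', hm]; field_simp; ring
  have r3 : (m - u/2)*(m-u)/(s+1) - (m-u)^2/(s+2) = ((v-u)/(4*D))*((s+1)*u+v) := by
    rw [hD', hm]; field_simp; ring
  have r1' : (v - m) * ((m + v)/2 - v/2) = ((v-u)/4) * m := by rw [hm]; ring
  have r2' : (v-m)^2/(s+2) + (m - v/2)*(v-m)/(s+1) = ((v-u)/(4*D))*((s+1)*v+u) := by
    rw [hD', hm]; field_simp; ring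
  have r3' : (v - v/2)*(v-m)/(s+1) - (v-m)^2/(s+2) = ((v-u)/(4*D))*((s+1)*u+v) := by
    rw [hD', hm]; field_simp; ring
  have keyeq : ∀ X Y : ℝ, 0 ≤ X → 0 ≤ Y →
      (((v-u)/4)*m)^(1-1/q) *
        (((v-u)/(4*D))*((s+1)*v+u) * X + ((v-u)/(4*D))*((s+1)*u+v) * Y)^(1/q)
      = ((v-u)/4) * (m^(1-1/q) * ((1/D)^(1/q) * (((s+1)*v+u) * X + ((s+1)*u+v) * Y)^(1/q))) := by
    intro X Y hX hY
    have hα : (0:ℝ) < (v-u)/4 := by linarith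
    have hv0 : (0:ℝ) < v := lt_trans hu huv
    have hc1 : (0:ℝ) ≤ (s+1)*v+u := by nlinarith [mul_pos (by linarith : (0:ℝ) < s+1) hv0]
    have hc2 : (0:ℝ) ≤ (s+1)*u+v := by nlinarith [mul_pos (by linarith : (0:ℝ) < s+1) hu]
    have hsum : (0:ℝ) ≤ ((s+1)*v+u) * X + ((s+1)*u+v) * Y :=
      add_nonneg (mul_nonneg hc1 hX) (mul_nonneg hc2 hY)
    have hin : ((v-u)/(4*D))*((s+1)*v+u) * X + ((v-u)/(4*D))*((s+1)*u+v) * Y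
        = ((v-u)/4) * ((1/D) * (((s+1)*v+u) * X + ((s+1)*u+v) * Y)) := by
      rw [show (v-u)/(4*D) = ((v-u)/4)*(1/D) by rw [div_mul_div_comm, mul_one]]
      ring
    rw [hin, Real.mul_rpow hα.le hm0.le,
      Real.mul_rpow hα.le (mul_nonneg (by positivity) hsum),
      Real.mul_rpow (by positivity) hsum]
    have hαq : ((v-u)/4)^(1-1/q) * ((v-u)/4)^(1/q) = (v-u)/4 := by
      rw [← Real.rpow_add hα]; norm_num
    linear_combination (m^(1-1/q) * ((1/D)^(1/q) *
      (((s+1)*v+u) * X + ((s+1)*u+v) * Y)^(1/q))) * hαq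
  rw [r1, r2, r3, keyeq (|f' m| ^ q) (|f' u| ^ q) hAm hAu] at b1
  rw [r1', r2', r3', keyeq (|f' v| ^ q) (|f' m| ^ q) hAv hAm,
    show ((s+1)*v+u) * |f' v| ^ q + ((s+1)*u+v) * |f' m| ^ q
      = ((s+1)*u+v) * |f' m| ^ q + ((s+1)*v+u) * |f' v| ^ q from by ring] at b2
  refine le_trans (le_trans (le_of_eq (by rw [identity, abs_mul, abs_of_pos hvu0]))
    (mul_le_mul_of_nonneg_right (abs_add_le I1 I2) hvu0.le)) ?_
  refine le_trans (mul_le_mul_of_nonneg_right (add_le_add b1 b2) hvu0.le) (le_of_eq ?_)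
  field_simp
  ring
end

section
/- Let 0 < u < v, s ∈ (0,1] and q ≥ 1. Then |(s-1)·L_s(u,v)^s + A(u,v)^s| ≤ (s^q·A(u,v)^{q-1}/((s+1)(s+2)·2^q))^{1/q}·(((s+1)u+v)·A(u,v)^{(s-1)q} + ((s+1)v+u)·v^{(s-1)q})^{1/q} + (s^q·A(u,v)^{q-1}/((s+1)(s+2)·2^q))^{1/q}·(((s+1)v+u)·A(u,v)^{(s-1)q} + ((s+1)u+v)·u^{(s-1)q})^{1/q}. -/
open MeasureTheory Set intervalIntegral Real

lemma base_int (a b s : ℝ) (hs : 0 < s) :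
    ∫ t in (0:ℝ)..1, t ^ s * (t * a + (1 - t) * b)
      = ((s + 1) * a + b) / ((s + 1) * (s + 2)) := by
  have hF : ∀ t ∈ uIcc (0:ℝ) 1,
      HasDerivAt (fun t : ℝ => (a - b) / (s + 2) * t ^ (s + 2) + b / (s + 1) * t ^ (s + 1))
        (t ^ s * (t * a + (1 - t) * b)) t := by
    intro t ht
    rw [uIcc_of_le zero_le_one, mem_Icc] at ht
    have d1 : HasDerivAt (fun t : ℝ => t ^ (s + 2)) ((s + 2) * t ^ (s + 1)) t := by
      have := Real.hasDerivAt_rpow_const (x := t) (p := s + 2) (Or.inr (by linarith))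
      simpa [show s + 2 - 1 = s + 1 by ring] using this
    have d2 : HasDerivAt (fun t : ℝ => t ^ (s + 1)) ((s + 1) * t ^ s) t := by
      have := Real.hasDerivAt_rpow_const (x := t) (p := s + 1) (Or.inr (by linarith))
      simpa [show s + 1 - 1 = s by ring] using this
    have := (d1.const_mul ((a - b) / (s + 2))).add (d2.const_mul (b / (s + 1)))
    refine this.congr_deriv ?_
    have hts : t ^ (s + 1) = t ^ s * t := by
      rw [Real.rpow_add' ht.1 (by linarith), Real.rpow_one]
    rw [hts]
    field_simp
    ring
  have hint : IntervalIntegrable (fun t : ℝ => t ^ s * (t * a + (1 - t) * b)) volume 0 1 := by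
    apply ContinuousOn.intervalIntegrable
    apply ContinuousOn.mul
    · exact continuousOn_id.rpow_const fun t ht => Or.inr hs.le
    · fun_prop
  rw [intervalIntegral.integral_eq_sub_of_hasDerivAt hF hint]
  rw [Real.one_rpow, Real.one_rpow, Real.zero_rpow (by linarith), Real.zero_rpow (by linarith)]
  field_simp
  ring

lemma flip_int (a b s : ℝ) (hs : 0 < s) :
    ∫ t in (0:ℝ)..1, (1 - t) ^ s * (t * a + (1 - t) * b)
      = ((s + 1) * b + a) / ((s + 1) * (s + 2)) := by
  have h2 : (∫ t in (0:ℝ)..1, (1 - t) ^ s * ((1 - t) * b + (1 - (1 - t)) * a))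
      = ∫ t in (1-(1:ℝ))..(1-(0:ℝ)), t ^ s * (t * b + (1 - t) * a) :=
    intervalIntegral.integral_comp_sub_left
      (f := fun t : ℝ => t ^ s * (t * b + (1 - t) * a)) (a := (0:ℝ)) (b := 1) 1
  rw [show (fun t : ℝ => (1 - t) ^ s * (t * a + (1 - t) * b))
      = fun t : ℝ => (1 - t) ^ s * ((1 - t) * b + (1 - (1 - t)) * a) by funext t; ring_nf]
  rw [h2]
  norm_num
  rw [base_int b a s hs]

lemma lin_int (a b : ℝ) :
    ∫ t in (0:ℝ)..1, (t * a + (1 - t) * b) = (a + b) / 2 := by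
  have h1 : IntervalIntegrable (fun t : ℝ => (a - b) * t) volume 0 1 :=
    (by fun_prop : Continuous fun t : ℝ => (a - b) * t).intervalIntegrable 0 1
  have h2 : IntervalIntegrable (fun _ : ℝ => b) volume 0 1 :=
    intervalIntegrable_const
  have : (fun t : ℝ => t * a + (1 - t) * b) = fun t : ℝ => (a - b) * t + b := by
    funext t; ring
  rw [this, intervalIntegral.integral_add h1 h2, intervalIntegral.integral_const_mul,
    integral_id, intervalIntegral.integral_const]
  norm_num; ring

lemma J_eq (x y A s : ℝ) (hx : 0 < x) (hy : 0 < y) (hA : A = (x + y) / 2)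
    (hxy : x ≠ y) (hs : 0 < s) :
    ∫ t in (0:ℝ)..1, (t * x + (1 - t) * y) * (t * x + (1 - t) * A) ^ (s - 1)
      = (2 * (x ^ (s + 1) - A ^ (s + 1)) / (s + 1) - x * (x ^ s - A ^ s) / s) / (x - A) := by
  have hA0 : 0 < A := by rw [hA]; linarith
  have hc : x - A ≠ 0 := by rw [hA]; intro h; apply hxy; linarith [sub_eq_zero.mp h]
  set c := x - A with hcdef
  have hgpos : ∀ t : ℝ, t ∈ Icc (0:ℝ) 1 → 0 < A + c * t := by
    intro t ht
    have h1 : A + c * t = (1 - t) * A + t * x := by rw [hcdef]; ring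
    rw [h1]
    rcases eq_or_lt_of_le ht.2 with h | h
    · rw [h]; norm_num; exact hx
    · nlinarith [mul_pos (by linarith : (0:ℝ) < 1 - t) hA0, mul_nonneg ht.1 hx.le]
  have hF : ∀ t ∈ uIcc (0:ℝ) 1,
      HasDerivAt (fun t : ℝ => 2 / ((s + 1) * c) * (A + c * t) ^ (s + 1)
          - x / (s * c) * (A + c * t) ^ s)
        ((t * x + (1 - t) * y) * (t * x + (1 - t) * A) ^ (s - 1)) t := by
    intro t ht
    rw [uIcc_of_le zero_le_one] at ht
    have hg := hgpos t ht
    have dlin : HasDerivAt (fun t : ℝ => A + c * t) c t := by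
      simpa using ((hasDerivAt_id t).const_mul c).const_add A
    have d1 : HasDerivAt (fun t : ℝ => (A + c * t) ^ (s + 1))
        (c * (s + 1) * (A + c * t) ^ s) t := by
      have := dlin.rpow_const (p := s + 1) (Or.inl hg.ne')
      simpa [show s + 1 - 1 = s by ring] using this
    have d2 : HasDerivAt (fun t : ℝ => (A + c * t) ^ s)
        (c * s * (A + c * t) ^ (s - 1)) t := by
      exact dlin.rpow_const (p := s) (Or.inl hg.ne')
    have := ((d1.const_mul (2 / ((s + 1) * c))).sub (d2.const_mul (x / (s * c))))
    refine this.congr_deriv ?_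
    have e1 : t * x + (1 - t) * A = A + c * t := by rw [hcdef]; ring
    have e2 : t * x + (1 - t) * y = 2 * (A + c * t) - x := by rw [hcdef, hA]; ring
    have e3 : (A + c * t) ^ s = (A + c * t) ^ (s - 1) * (A + c * t) := by
      rw [← Real.rpow_add_one hg.ne' (s - 1), show s - 1 + 1 = s by ring]
    rw [e1, e2, e3]
    field_simp
  have hint : IntervalIntegrable
      (fun t : ℝ => (t * x + (1 - t) * y) * (t * x + (1 - t) * A) ^ (s - 1)) volume 0 1 := by
    apply ContinuousOn.intervalIntegrable
    apply ContinuousOn.mul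
    · fun_prop
    · apply ContinuousOn.rpow_const
      · fun_prop
      · intro t ht
        rw [uIcc_of_le zero_le_one] at ht
        have := hgpos t ht
        left
        intro h
        rw [show t * x + (1 - t) * A = A + c * t by rw [hcdef]; ring] at h
        exact this.ne' h
  rw [intervalIntegral.integral_eq_sub_of_hasDerivAt hF hint]
  have e4 : A + c * 1 = x := by rw [hcdef]; ring
  have e5 : A + c * 0 = A := by ring
  rw [e4, e5]
  field_simp
  ring

lemma alg_helper (u d P Q R s : ℝ) (hs : s ≠ 0) (h1 : s + 1 ≠ 0) (hd : d ≠ 0) :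
    (s - 1) * (((u + 2 * d) * Q - u * P) / ((s + 1) * (2 * d))) + R
      = s / 2 * ((2 * ((u + 2 * d) * Q - (u + d) * R) / (s + 1)
            - (u + 2 * d) * (Q - R) / s) / d)
        + s / 2 * ((2 * (u * P - (u + d) * R) / (s + 1) - u * (P - R) / s) / (-d)) := by
  field_simp
  ring

lemma identity (u v s : ℝ) (hu : 0 < u) (huv : u < v) (hs : 0 < s) :
    (s - 1) * ((v ^ (s + 1) - u ^ (s + 1)) / ((s + 1) * (v - u))) + ((u + v) / 2) ^ s
      = s / 2 * (∫ t in (0:ℝ)..1,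
            (t * v + (1 - t) * u) * (t * v + (1 - t) * ((u + v) / 2)) ^ (s - 1))
        + s / 2 * (∫ t in (0:ℝ)..1,
            (t * u + (1 - t) * v) * (t * u + (1 - t) * ((u + v) / 2)) ^ (s - 1)) := by
  have hv : 0 < v := lt_trans hu huv
  have hA0 : (0:ℝ) < (u + v) / 2 := by linarith
  rw [J_eq v u ((u + v) / 2) s hv hu (by ring) (ne_of_gt huv) hs,
      J_eq u v ((u + v) / 2) s hu hv (by ring) (ne_of_lt huv) hs]
  have eu : u ^ (s + 1) = u ^ s * u := Real.rpow_add_one hu.ne' s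
  have ev : v ^ (s + 1) = v ^ s * v := Real.rpow_add_one hv.ne' s
  have eA : ((u + v) / 2) ^ (s + 1) = ((u + v) / 2) ^ s * ((u + v) / 2) :=
    Real.rpow_add_one hA0.ne' s
  have h3 : s + 1 ≠ 0 := by linarith
  have hd : (v - u) / 2 ≠ 0 := by intro h; apply (ne_of_gt huv).symm; linarith
  have key := alg_helper u ((v - u) / 2) (u ^ s) (v ^ s) (((u + v) / 2) ^ s) s hs.ne' h3 hd
  rw [show u + 2 * ((v - u) / 2) = v by ring, show u + (v - u) / 2 = (u + v) / 2 by ring] at key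
  rw [eu, ev, eA, show v - (u + v) / 2 = (v - u) / 2 by ring,
      show u - (u + v) / 2 = -((v - u) / 2) by ring, show (s+1) * (v-u) = (s+1)*(2*((v-u)/2)) by ring]
  convert key using 3 <;> ring

lemma le_rpow_self {t s : ℝ} (ht0 : 0 ≤ t) (ht1 : t ≤ 1) (hs0 : 0 < s) (hs1 : s ≤ 1) :
    t ≤ t ^ s := by
  rcases eq_or_lt_of_le ht0 with h | h
  · rw [← h, Real.zero_rpow hs0.ne']
  · calc t = t ^ (1:ℝ) := (Real.rpow_one t).symm
    _ ≤ t ^ s := Real.rpow_le_rpow_of_exponent_ge h ht1 hs1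

lemma conv_pt {a b t β s : ℝ} (ha : 0 < a) (hb : 0 < b) (ht0 : 0 ≤ t) (ht1 : t ≤ 1)
    (hβ : β ≤ 0) (hs0 : 0 < s) (hs1 : s ≤ 1) :
    (t * a + (1 - t) * b) ^ β ≤ t ^ s * a ^ β + (1 - t) ^ s * b ^ β := by
  have hgm : a ^ t * b ^ (1 - t) ≤ t * a + (1 - t) * b := by
    have := Real.geom_mean_le_arith_mean2_weighted (w₁ := t) (w₂ := 1 - t) (p₁ := a) (p₂ := b)
      ht0 (by linarith) ha.le hb.le (by ring)
    linarith [this]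
  have hgmpos : 0 < a ^ t * b ^ (1 - t) :=
    mul_pos (Real.rpow_pos_of_pos ha t) (Real.rpow_pos_of_pos hb (1 - t))
  have h2 : (t * a + (1 - t) * b) ^ β ≤ (a ^ t * b ^ (1 - t)) ^ β :=
    Real.rpow_le_rpow_of_nonpos hgmpos hgm hβ
  have h3 : (a ^ t * b ^ (1 - t)) ^ β = (a ^ β) ^ t * (b ^ β) ^ (1 - t) := by
    rw [Real.mul_rpow (Real.rpow_pos_of_pos ha t).le (Real.rpow_pos_of_pos hb (1 - t)).le,
      ← Real.rpow_mul ha.le, ← Real.rpow_mul hb.le, mul_comm t β, mul_comm (1 - t) β,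
      Real.rpow_mul ha.le, Real.rpow_mul hb.le]
  have h4 : (a ^ β) ^ t * (b ^ β) ^ (1 - t) ≤ t * a ^ β + (1 - t) * b ^ β := by
    have := Real.geom_mean_le_arith_mean2_weighted (w₁ := t) (w₂ := 1 - t)
      (p₁ := a ^ β) (p₂ := b ^ β) ht0 (by linarith)
      (Real.rpow_pos_of_pos ha β).le (Real.rpow_pos_of_pos hb β).le (by ring)
    linarith [this]
  have h5 : t * a ^ β ≤ t ^ s * a ^ β :=
    mul_le_mul_of_nonneg_right (le_rpow_self ht0 ht1 hs0 hs1) (Real.rpow_pos_of_pos ha β).le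
  have h6 : (1 - t) * b ^ β ≤ (1 - t) ^ s * b ^ β :=
    mul_le_mul_of_nonneg_right (le_rpow_self (by linarith) (by linarith) hs0 hs1)
      (Real.rpow_pos_of_pos hb β).le
  linarith [h2, h3 ▸ h4]

lemma conv_int (x y β s : ℝ) (hx : 0 < x) (hy : 0 < y) (hβ : β ≤ 0)
    (hs0 : 0 < s) (hs1 : s ≤ 1) :
    ∫ t in (0:ℝ)..1, (t * x + (1 - t) * y) * (t * x + (1 - t) * ((x + y) / 2)) ^ β
      ≤ (((s + 1) * x + y) * x ^ β + ((s + 1) * y + x) * ((x + y) / 2) ^ β)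
        / ((s + 1) * (s + 2)) := by
  set A : ℝ := (x + y) / 2 with hA
  have hA0 : 0 < A := by rw [hA]; linarith
  have hwnn : ∀ t ∈ Icc (0:ℝ) 1, 0 ≤ t * x + (1 - t) * y := fun t ht => by
    nlinarith [mul_nonneg ht.1 hx.le, mul_nonneg (by linarith [ht.2] : (0:ℝ) ≤ 1 - t) hy.le]
  have hgpos : ∀ t ∈ Icc (0:ℝ) 1, 0 < t * x + (1 - t) * A := fun t ht => by
    rcases eq_or_lt_of_le ht.2 with h | h
    · rw [h]; norm_num; exact hx
    · nlinarith [mul_nonneg ht.1 hx.le, mul_pos (by linarith : (0:ℝ) < 1 - t) hA0]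
  have cont1 : ContinuousOn (fun t : ℝ => (t * x + (1 - t) * y) * (t * x + (1 - t) * A) ^ β)
      (uIcc (0:ℝ) 1) := by
    rw [uIcc_of_le zero_le_one]
    apply ContinuousOn.mul (by fun_prop)
    exact ContinuousOn.rpow_const (by fun_prop) fun t ht => Or.inl (hgpos t ht).ne'
  have cont2 : ContinuousOn (fun t : ℝ =>
      (t * x + (1 - t) * y) * (t ^ s * x ^ β + (1 - t) ^ s * A ^ β)) (uIcc (0:ℝ) 1) := by
    apply ContinuousOn.mul (by fun_prop)
    apply ContinuousOn.add
    · exact ContinuousOn.mul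
        (ContinuousOn.rpow_const continuousOn_id fun t ht => Or.inr hs0.le) continuousOn_const
    · exact ContinuousOn.mul
        (ContinuousOn.rpow_const (by fun_prop) fun t ht => Or.inr hs0.le) continuousOn_const
  have step1 : ∫ t in (0:ℝ)..1, (t * x + (1 - t) * y) * (t * x + (1 - t) * A) ^ β
      ≤ ∫ t in (0:ℝ)..1, (t * x + (1 - t) * y) * (t ^ s * x ^ β + (1 - t) ^ s * A ^ β) := by
    apply intervalIntegral.integral_mono_on zero_le_one
      (cont1.intervalIntegrable) (cont2.intervalIntegrable)
    intro t ht
    exact mul_le_mul_of_nonneg_left (conv_pt hx hA0 ht.1 ht.2 hβ hs0 hs1) (hwnn t ht)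
  have step2 : ∫ t in (0:ℝ)..1, (t * x + (1 - t) * y) * (t ^ s * x ^ β + (1 - t) ^ s * A ^ β)
      = (((s + 1) * x + y) * x ^ β + ((s + 1) * y + x) * A ^ β) / ((s + 1) * (s + 2)) := by
    have e : (fun t : ℝ => (t * x + (1 - t) * y) * (t ^ s * x ^ β + (1 - t) ^ s * A ^ β))
        = fun t : ℝ => x ^ β * (t ^ s * (t * x + (1 - t) * y))
            + A ^ β * ((1 - t) ^ s * (t * x + (1 - t) * y)) := by
      funext t; ring
    rw [e, intervalIntegral.integral_add, intervalIntegral.integral_const_mul,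
      intervalIntegral.integral_const_mul, base_int x y s hs0, flip_int x y s hs0]
    · field_simp
    · apply ContinuousOn.intervalIntegrable
      apply ContinuousOn.mul continuousOn_const
      exact ContinuousOn.mul
        (ContinuousOn.rpow_const continuousOn_id fun t ht => Or.inr hs0.le) (by fun_prop)
    · apply ContinuousOn.intervalIntegrable
      apply ContinuousOn.mul continuousOn_const
      exact ContinuousOn.mul
        (ContinuousOn.rpow_const (by fun_prop) fun t ht => Or.inr hs0.le) (by fun_prop)
  linarith [step1, step2.le, step2.ge]

lemma rpow_bound {m M w c : ℝ} (hm : 0 < m) (h1 : m ≤ w) (h2 : w ≤ M) :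
    w ^ c ≤ max (m ^ c) (M ^ c) := by
  rcases le_total 0 c with hc | hc
  · exact le_max_of_le_right (Real.rpow_le_rpow (by linarith) h2 hc)
  · exact le_max_of_le_left (Real.rpow_le_rpow_of_nonpos hm h1 hc)

lemma lin_mem {a b t : ℝ} (ht0 : 0 ≤ t) (ht1 : t ≤ 1) :
    min a b ≤ t * a + (1 - t) * b ∧ t * a + (1 - t) * b ≤ max a b := by
  constructor
  · rcases le_total a b with h | h
    · rw [min_eq_left h]
      nlinarith [mul_nonneg (by linarith : (0:ℝ) ≤ 1 - t) (by linarith : (0:ℝ) ≤ b - a)]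
    · rw [min_eq_right h]
      nlinarith [mul_nonneg ht0 (by linarith : (0:ℝ) ≤ a - b)]
  · rcases le_total a b with h | h
    · rw [max_eq_right h]
      nlinarith [mul_nonneg ht0 (by linarith : (0:ℝ) ≤ b - a)]
    · rw [max_eq_left h]
      nlinarith [mul_nonneg (by linarith : (0:ℝ) ≤ 1 - t) (by linarith : (0:ℝ) ≤ a - b)]

lemma holder_step_s15 (x y q s : ℝ) (hx : 0 < x) (hy : 0 < y) (hq : 1 < q)
    (hs0 : 0 < s) (hs1 : s ≤ 1) :
    ∫ t in (0:ℝ)..1, (t * x + (1 - t) * y) * (t * x + (1 - t) * ((x + y) / 2)) ^ (s - 1)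
      ≤ ((x + y) / 2) ^ ((q - 1) / q)
        * (∫ t in (0:ℝ)..1,
            (t * x + (1 - t) * y) * (t * x + (1 - t) * ((x + y) / 2)) ^ ((s - 1) * q)) ^ (1 / q) := by
  set A : ℝ := (x + y) / 2 with hA
  have hA0 : 0 < A := by rw [hA]; linarith
  set p : ℝ := q / (q - 1) with hp
  have hpq : p.HolderConjugate q := (Real.HolderConjugate.conjExponent hq).symm
  have hp1 : 1 < p := hpq.lt
  have hp0 : p ≠ 0 := by positivity
  have hq0 : q ≠ 0 := by positivity
  -- positivity of w and g on Ioc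
  have hw : ∀ t ∈ Ioc (0:ℝ) 1, 0 < t * x + (1 - t) * y := fun t ht => by
    nlinarith [mul_pos ht.1 hx, mul_nonneg (by linarith [ht.2] : (0:ℝ) ≤ 1 - t) hy.le]
  have hg : ∀ t ∈ Ioc (0:ℝ) 1, 0 < t * x + (1 - t) * A := fun t ht => by
    nlinarith [mul_pos ht.1 hx, mul_nonneg (by linarith [ht.2] : (0:ℝ) ≤ 1 - t) hA0.le]
  -- bounds for w and g
  have hwb : ∀ t ∈ Ioc (0:ℝ) 1, min x y ≤ t * x + (1 - t) * y ∧ t * x + (1 - t) * y ≤ max x y :=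
    fun t ht => lin_mem ht.1.le ht.2
  have hgb : ∀ t ∈ Ioc (0:ℝ) 1, min x A ≤ t * x + (1 - t) * A ∧ t * x + (1 - t) * A ≤ max x A :=
    fun t ht => lin_mem ht.1.le ht.2
  have hmin : 0 < min x y := lt_min hx hy
  have hminA : 0 < min x A := lt_min hx hA0
  -- the two Hölder factors
  set f : ℝ → ℝ := fun t => (t * x + (1 - t) * y) ^ (1 / p) with hf
  set g : ℝ → ℝ := fun t => (t * x + (1 - t) * y) ^ (1 / q) * (t * x + (1 - t) * A) ^ (s - 1)
    with hgdef
  have hfin : IsFiniteMeasure (volume.restrict (Ioc (0:ℝ) 1)) := by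
    constructor
    rw [Measure.restrict_apply_univ, Real.volume_Ioc]
    exact ENNReal.ofReal_lt_top
  have contf : ContinuousOn f (Ioc (0:ℝ) 1) :=
    ContinuousOn.rpow_const (by fun_prop) fun t ht => Or.inl (hw t ht).ne'
  have contg : ContinuousOn g (Ioc (0:ℝ) 1) :=
    ContinuousOn.mul
      (ContinuousOn.rpow_const (by fun_prop) fun t ht => Or.inl (hw t ht).ne')
      (ContinuousOn.rpow_const (by fun_prop) fun t ht => Or.inl (hg t ht).ne')
  have memf : MemLp f (ENNReal.ofReal p) (volume.restrict (Ioc (0:ℝ) 1)) := by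
    apply MemLp.of_bound (contf.aestronglyMeasurable measurableSet_Ioc)
      (max ((min x y) ^ (1/p)) ((max x y) ^ (1/p)))
    rw [ae_restrict_iff' measurableSet_Ioc]
    apply ae_of_all
    intro t ht
    rw [Real.norm_eq_abs, abs_of_nonneg (Real.rpow_nonneg (hw t ht).le _)]
    exact rpow_bound hmin (hwb t ht).1 (hwb t ht).2
  have memg : MemLp g (ENNReal.ofReal q) (volume.restrict (Ioc (0:ℝ) 1)) := by
    apply MemLp.of_bound (contg.aestronglyMeasurable measurableSet_Ioc)
      ((max ((min x y) ^ (1/q)) ((max x y) ^ (1/q)))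
        * (max ((min x A) ^ (s-1)) ((max x A) ^ (s-1))))
    rw [ae_restrict_iff' measurableSet_Ioc]
    apply ae_of_all
    intro t ht
    rw [Real.norm_eq_abs, abs_of_nonneg (mul_nonneg (Real.rpow_nonneg (hw t ht).le _)
      (Real.rpow_nonneg (hg t ht).le _))]
    apply mul_le_mul (rpow_bound hmin (hwb t ht).1 (hwb t ht).2)
      (rpow_bound hminA (hgb t ht).1 (hgb t ht).2)
      (Real.rpow_nonneg (hg t ht).le _)
      (le_trans (Real.rpow_nonneg hmin.le _) (le_max_left _ _))
  have hnnf : 0 ≤ᵐ[volume.restrict (Ioc (0:ℝ) 1)] f := by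
    filter_upwards [ae_restrict_mem measurableSet_Ioc] with t ht
    exact Real.rpow_nonneg (hw t ht).le _
  have hnng : 0 ≤ᵐ[volume.restrict (Ioc (0:ℝ) 1)] g := by
    filter_upwards [ae_restrict_mem measurableSet_Ioc] with t ht
    exact mul_nonneg (Real.rpow_nonneg (hw t ht).le _) (Real.rpow_nonneg (hg t ht).le _)
  have holder := MeasureTheory.integral_mul_le_Lp_mul_Lq_of_nonneg hpq hnnf hnng memf memg
  -- identify the three integrals
  have e1 : ∫ t in Ioc (0:ℝ) 1, f t * g t
      = ∫ t in (0:ℝ)..1, (t * x + (1 - t) * y) * (t * x + (1 - t) * A) ^ (s - 1) := by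
    rw [intervalIntegral.integral_of_le zero_le_one]
    apply setIntegral_congr_fun measurableSet_Ioc
    intro t ht
    have hwt := hw t ht
    simp only [hf, hgdef]
    rw [← mul_assoc, ← Real.rpow_add hwt, one_div, one_div, hpq.inv_add_inv_eq_one, Real.rpow_one]
  have e2 : ∫ t in Ioc (0:ℝ) 1, f t ^ p = A := by
    have : ∫ t in Ioc (0:ℝ) 1, f t ^ p = ∫ t in (0:ℝ)..1, (t * x + (1 - t) * y) := by
      rw [intervalIntegral.integral_of_le zero_le_one]
      apply setIntegral_congr_fun measurableSet_Ioc
      intro t ht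
      simp only [hf]
      rw [← Real.rpow_mul (hw t ht).le, one_div, inv_mul_cancel₀ hp0, Real.rpow_one]
    rw [this, lin_int]
  have e3 : ∫ t in Ioc (0:ℝ) 1, g t ^ q
      = ∫ t in (0:ℝ)..1, (t * x + (1 - t) * y) * (t * x + (1 - t) * A) ^ ((s - 1) * q) := by
    rw [intervalIntegral.integral_of_le zero_le_one]
    apply setIntegral_congr_fun measurableSet_Ioc
    intro t ht
    simp only [hgdef]
    rw [Real.mul_rpow (Real.rpow_nonneg (hw t ht).le _) (Real.rpow_nonneg (hg t ht).le _),
      ← Real.rpow_mul (hw t ht).le, one_div, inv_mul_cancel₀ hq0, Real.rpow_one,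
      ← Real.rpow_mul (hg t ht).le]
  rw [e1, e2, e3] at holder
  have hfrac : 1 / p = (q - 1) / q := by
    rw [hp, one_div_div]
  rw [← hfrac]
  rw [intervalIntegral.integral_of_le zero_le_one] at holder ⊢
  exact holder

lemma integrand_nonneg (x y A β : ℝ) (hx : 0 ≤ x) (hy : 0 ≤ y) (hA : 0 ≤ A) :
    ∀ t ∈ Icc (0:ℝ) 1, 0 ≤ (t * x + (1 - t) * y) * (t * x + (1 - t) * A) ^ β := by
  intro t ht
  have h0 : (0:ℝ) ≤ 1 - t := by linarith [ht.2]
  have h1 : 0 ≤ t * x + (1 - t) * y := by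
    have a1 := mul_nonneg ht.1 hx
    have a2 := mul_nonneg h0 hy
    linarith
  have h2 : 0 ≤ t * x + (1 - t) * A := by
    have a1 := mul_nonneg ht.1 hx
    have a2 := mul_nonneg h0 hA
    linarith
  exact mul_nonneg h1 (Real.rpow_nonneg h2 _)

lemma term_bound (x y q s : ℝ) (hx : 0 < x) (hy : 0 < y) (hq : 1 ≤ q)
    (hs0 : 0 < s) (hs1 : s ≤ 1) :
    s / 2 * ∫ t in (0:ℝ)..1,
        (t * x + (1 - t) * y) * (t * x + (1 - t) * ((x + y) / 2)) ^ (s - 1)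
      ≤ (s ^ q * ((x + y) / 2) ^ (q - 1) / ((s + 1) * (s + 2) * 2 ^ q)) ^ (1 / q) *
          (((s + 1) * y + x) * ((x + y) / 2) ^ ((s - 1) * q)
            + ((s + 1) * x + y) * x ^ ((s - 1) * q)) ^ (1 / q) := by
  have hA0 : (0:ℝ) < (x + y) / 2 := by linarith
  have hD : (0:ℝ) < (s + 1) * (s + 2) := by nlinarith
  have hs2 : (0:ℝ) ≤ s / 2 := by linarith
  rcases eq_or_lt_of_le hq with h1 | h1
  · -- q = 1
    subst h1
    have hconv := conv_int x y (s - 1) s hx hy (by linarith) hs0 hs1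
    have e : (s ^ (1:ℝ) * ((x + y) / 2) ^ ((1:ℝ) - 1) / ((s + 1) * (s + 2) * 2 ^ (1:ℝ)))
          ^ (1 / (1:ℝ)) *
          (((s + 1) * y + x) * ((x + y) / 2) ^ ((s - 1) * (1:ℝ))
            + ((s + 1) * x + y) * x ^ ((s - 1) * (1:ℝ))) ^ (1 / (1:ℝ))
        = s / 2 * ((((s + 1) * x + y) * x ^ (s - 1)
            + ((s + 1) * y + x) * ((x + y) / 2) ^ (s - 1)) / ((s + 1) * (s + 2))) := by
      rw [show (s - 1) * (1:ℝ) = s - 1 by ring]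
      norm_num
      field_simp
      ring
    rw [e]
    exact mul_le_mul_of_nonneg_left hconv hs2
  · -- q > 1
    have hq0 : q ≠ 0 := by positivity
    set N : ℝ := ((s + 1) * y + x) * ((x + y) / 2) ^ ((s - 1) * q)
        + ((s + 1) * x + y) * x ^ ((s - 1) * q) with hN
    have hN0 : 0 ≤ N := by
      apply add_nonneg <;> apply mul_nonneg
      · nlinarith
      · exact Real.rpow_nonneg hA0.le _
      · nlinarith
      · exact Real.rpow_nonneg hx.le _
    have hIq0 : 0 ≤ ∫ t in (0:ℝ)..1,
        (t * x + (1 - t) * y) * (t * x + (1 - t) * ((x + y) / 2)) ^ ((s - 1) * q) :=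
      intervalIntegral.integral_nonneg zero_le_one
        (integrand_nonneg x y ((x + y) / 2) ((s - 1) * q) hx.le hy.le hA0.le)
    have hβ : (s - 1) * q ≤ 0 := mul_nonpos_of_nonpos_of_nonneg (by linarith) (by linarith)
    have hconv := conv_int x y ((s - 1) * q) s hx hy hβ hs0 hs1
    have step1 := holder_step_s15 x y q s hx hy h1 hs0 hs1
    have step2 : (∫ t in (0:ℝ)..1,
          (t * x + (1 - t) * y) * (t * x + (1 - t) * ((x + y) / 2)) ^ ((s - 1) * q)) ^ (1 / q)
        ≤ ((((s + 1) * x + y) * x ^ ((s-1)*q)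
            + ((s + 1) * y + x) * ((x + y) / 2) ^ ((s-1)*q)) / ((s + 1) * (s + 2))) ^ (1 / q) :=
      Real.rpow_le_rpow hIq0 hconv (by positivity)
    set K : ℝ := (((s + 1) * x + y) * x ^ ((s-1)*q)
        + ((s + 1) * y + x) * ((x + y) / 2) ^ ((s-1)*q)) / ((s + 1) * (s + 2)) with hK
    have hK0 : 0 ≤ K := by
      rw [hK]
      apply div_nonneg _ hD.le
      rw [hN, add_comm] at hN0
      exact hN0
    have chain : s / 2 * ∫ t in (0:ℝ)..1,
          (t * x + (1 - t) * y) * (t * x + (1 - t) * ((x + y) / 2)) ^ (s - 1)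
        ≤ s / 2 * (((x + y) / 2) ^ ((q - 1) / q) * K ^ (1 / q)) := by
      apply mul_le_mul_of_nonneg_left _ hs2
      calc _ ≤ _ := step1
      _ ≤ _ := by
        apply mul_le_mul_of_nonneg_left step2 (Real.rpow_nonneg hA0.le _)
    apply le_trans chain
    -- now equality of the closed forms
    have e1 : s / 2 = ((s / 2) ^ q) ^ (1 / q) := by
      rw [← Real.rpow_mul (by positivity), mul_one_div_cancel hq0, Real.rpow_one]
    have e2 : ((x + y) / 2) ^ ((q - 1) / q) = (((x + y) / 2) ^ (q - 1)) ^ (1 / q) := by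
      rw [← Real.rpow_mul hA0.le, show (q - 1) * (1 / q) = (q - 1) / q by ring]
    rw [e1, e2, ← Real.mul_rpow (Real.rpow_nonneg (by positivity) _) hK0,
      ← Real.mul_rpow (Real.rpow_nonneg (by positivity) _)
        (mul_nonneg (Real.rpow_nonneg hA0.le _) hK0),
      ← Real.mul_rpow (by positivity) hN0]
    apply le_of_eq
    congr 1
    rw [hK, Real.div_rpow (by linarith) (by norm_num), hN]
    have h2q : (0:ℝ) < 2 ^ q := Real.rpow_pos_of_pos (by norm_num) q
    field_simp
    ring

theorem stmt_15 (u v q s : ℝ) (hu : 0 < u) (huv : u < v)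
    (hq : 1 ≤ q) (hs0 : 0 < s) (hs1 : s ≤ 1) :
    |(s - 1) * ((v ^ (s + 1) - u ^ (s + 1)) / ((s + 1) * (v - u))) + ((u + v) / 2) ^ s|
      ≤ (s ^ q * ((u + v) / 2) ^ (q - 1) / ((s + 1) * (s + 2) * 2 ^ q)) ^ (1 / q) *
          (((s + 1) * u + v) * ((u + v) / 2) ^ ((s - 1) * q)
            + ((s + 1) * v + u) * v ^ ((s - 1) * q)) ^ (1 / q)
        + (s ^ q * ((u + v) / 2) ^ (q - 1) / ((s + 1) * (s + 2) * 2 ^ q)) ^ (1 / q) *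
          (((s + 1) * v + u) * ((u + v) / 2) ^ ((s - 1) * q)
            + ((s + 1) * u + v) * u ^ ((s - 1) * q)) ^ (1 / q) := by
  have hv : 0 < v := lt_trans hu huv
  have hA0 : (0:ℝ) < (u + v) / 2 := by linarith
  have hid := identity u v s hu huv hs0
  have hI1 : 0 ≤ ∫ t in (0:ℝ)..1,
      (t * v + (1 - t) * u) * (t * v + (1 - t) * ((u + v) / 2)) ^ (s - 1) :=
    intervalIntegral.integral_nonneg zero_le_one
      (integrand_nonneg v u ((u + v) / 2) (s - 1) hv.le hu.le hA0.le)
  have hI2 : 0 ≤ ∫ t in (0:ℝ)..1,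
      (t * u + (1 - t) * v) * (t * u + (1 - t) * ((u + v) / 2)) ^ (s - 1) :=
    intervalIntegral.integral_nonneg zero_le_one
      (integrand_nonneg u v ((u + v) / 2) (s - 1) hu.le hv.le hA0.le)
  have hnn : 0 ≤ (s - 1) * ((v ^ (s + 1) - u ^ (s + 1)) / ((s + 1) * (v - u)))
      + ((u + v) / 2) ^ s := by
    rw [hid]
    have := mul_nonneg (by linarith : (0:ℝ) ≤ s / 2) hI1
    have := mul_nonneg (by linarith : (0:ℝ) ≤ s / 2) hI2
    linarith
  rw [abs_of_nonneg hnn, hid]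
  have h1 := term_bound v u q s hv hu hq hs0 hs1
  rw [show v + u = u + v from add_comm v u] at h1
  have h2 := term_bound u v q s hu hv hq hs0 hs1
  exact add_le_add h1 h2
end

section
/- Let J = [0,∞) and let f : J → ℝ be differentiable on the interior of J with f' integrable on [u,v], where u, v ∈ J and 0 < u < v. Let q > 1 and p satisfy 1/p + 1/q = 1, and let s ∈ (0,1]. If |f'|^q is s-concave in the second sense on [u,v], then for every x ∈ [u,v]: |((v-x)(v·f(v) - u·f(x)) + (x-u)(v·f(x) - u·f(u)))/(v-u)² - (1/(v-u))·∫_u^v f(μ) dμ| ≤ (2^{(s-1)/q}·L_p(u,v)/(v-u)²)·[(v-x)²·|f'((x+v)/2)| + (x-u)²·|f'((x+u)/2)|]. -/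
open MeasureTheory intervalIntegral Set

set_option maxHeartbeats 1000000 in
lemma key_bound (f' : ℝ → ℝ) (u v p q s : ℝ) (hu : 0 < u) (huv : u < v)
    (hq : 1 < q) (hpq : 1 / p + 1 / q = 1) (hs0 : 0 < s) (hs1 : s ≤ 1)
    (hint : IntervalIntegrable f' volume u v)
    (hsconc : ∀ a ∈ Set.Icc u v, ∀ b ∈ Set.Icc u v, ∀ t ∈ Set.Icc (0:ℝ) 1,
      t ^ s * |f' a| ^ q + (1 - t) ^ s * |f' b| ^ q ≤ |f' (t * a + (1 - t) * b)| ^ q)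
    (a b : ℝ) (hua : u ≤ a) (hab : a ≤ b) (hbv : b ≤ v) :
    |∫ μ in a..b, ((v - u) * μ - ((v - u) * a - u * (b - a))) * f' μ|
      ≤ (b - a) ^ 2 * ((v ^ (p + 1) - u ^ (p + 1)) / ((p + 1) * (v - u))) ^ (1 / p)
          * ((2:ℝ) ^ ((s - 1) / q) * |f' ((a + b) / 2)|) := by
  have hq0 : (0:ℝ) < q := lt_trans one_pos hq
  have hinvq0 : 0 < 1 / q := by positivity
  have hinvq1 : 1 / q < 1 := by rw [div_lt_one hq0]; exact hq
  have hinvp : 1 / p = 1 - 1 / q := by linarith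
  have hinvp0 : 0 < 1 / p := by rw [hinvp]; linarith
  have hp0 : 0 < p := by
    rcases lt_trichotomy p 0 with h | h | h
    · exfalso; have : 1 / p < 0 := by exact div_neg_of_pos_of_neg one_pos h
      linarith
    · exfalso; rw [h] at hinvp0; simp at hinvp0
    · exact h
  have hp1 : 1 < p := by
    have : 1 / p < 1 := by rw [hinvp]; linarith
    exact (div_lt_one hp0).mp this
  have hconj : p.HolderConjugate q := Real.holderConjugate_iff.mpr ⟨hp1, by rw [← one_div, ← one_div]; exact hpq⟩
  have hvu : 0 < v - u := by linarith
  have hba : 0 ≤ b - a := by linarith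
  have hG : (0:ℝ) ≤ |f' ((a + b) / 2)| := abs_nonneg _
  set G : ℝ := |f' ((a + b) / 2)| with hGdef
  set c : ℝ := (v - u) * a - u * (b - a) with hc
  set K : ℝ → ℝ := fun μ => (v - u) * μ - c with hK
  set g : ℝ → ℝ := fun μ => |f' μ| ^ q with hg
  have h2s : (2:ℝ) ^ s * (1/2 : ℝ) ^ s = 1 := by
    rw [← Real.mul_rpow (by norm_num) (by norm_num)]
    norm_num
  have h2spos : (0:ℝ) < (2:ℝ) ^ s := Real.rpow_pos_of_pos (by norm_num) s
  -- global bound for g on [u,v]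
  set M : ℝ := 2 ^ s * |f' ((u + v) / 2)| ^ q with hM
  have hM0 : 0 ≤ M := by positivity
  have hg_bd : ∀ μ ∈ Set.Icc u v, g μ ≤ M := by
    intro μ hμ
    have hμ' : u + v - μ ∈ Set.Icc u v := by
      simp only [Set.mem_Icc] at hμ ⊢; constructor <;> linarith
    have h := hsconc μ hμ (u + v - μ) hμ' (1/2) (by simp only [Set.mem_Icc]; norm_num)
    have harg : (1/2 : ℝ) * μ + (1 - 1/2) * (u + v - μ) = (u + v) / 2 := by ring
    rw [harg] at h
    have h12 : (1 - (1:ℝ)/2) = 1/2 := by norm_num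
    rw [h12] at h
    have hX' : (0:ℝ) ≤ (1/2:ℝ) ^ s * |f' (u + v - μ)| ^ q := by positivity
    have heq : g μ = 2 ^ s * ((1/2:ℝ) ^ s * g μ) := by rw [← mul_assoc, h2s, one_mul]
    rw [heq, hM]
    have hle : (1/2:ℝ) ^ s * |f' μ| ^ q ≤ |f' ((u + v) / 2)| ^ q := by linarith
    exact mul_le_mul_of_nonneg_left hle h2spos.le
  -- basic facts about K
  have hKnn : ∀ μ ∈ Set.Icc a b, 0 ≤ K μ := by
    intro μ hμ
    simp only [Set.mem_Icc] at hμ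
    have : K μ = (v - u) * (μ - a) + u * (b - a) := by rw [hK, hc]; ring
    rw [this]
    have := hμ.1; have := hμ.2
    nlinarith
  have hKub : ∀ μ ∈ Set.Icc a b, K μ ≤ v * (b - a) := by
    intro μ hμ
    simp only [Set.mem_Icc] at hμ
    have : K μ = (v - u) * (μ - a) + u * (b - a) := by rw [hK, hc]; ring
    rw [this]
    have := hμ.1; have := hμ.2
    nlinarith
  have hIab : Set.Ioc a b ⊆ Set.Ioc u v := Set.Ioc_subset_Ioc hua hbv
  have hIabIcc : Set.Ioc a b ⊆ Set.Icc a b := Set.Ioc_subset_Icc_self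
  have hIccuv : Set.Icc a b ⊆ Set.Icc u v := Set.Icc_subset_Icc hua hbv
  have haesm : AEStronglyMeasurable f' (volume.restrict (Set.Ioc a b)) := by
    have h1 : IntegrableOn f' (Set.Ioc u v) volume := hint.1
    exact h1.aestronglyMeasurable.mono_measure
      (Measure.restrict_mono (Set.Ioc_subset_Ioc hua hbv) le_rfl)
  haveI : IsFiniteMeasure (volume.restrict (Set.Ioc a b)) :=
    ⟨by rw [Measure.restrict_apply_univ]; exact measure_Ioc_lt_top⟩
  have hq_inv : ∀ r : ℝ, 0 ≤ r → (r ^ q) ^ (1/q) = r := by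
    intro r hr
    rw [← Real.rpow_mul hr, mul_one_div, div_self hq0.ne', Real.rpow_one]
  have hKmem : MemLp K (ENNReal.ofReal p) (volume.restrict (Set.Ioc a b)) := by
    refine MemLp.of_bound ?_ (v * (b - a)) ?_
    · exact (Continuous.aestronglyMeasurable (by continuity : Continuous K))
    · refine (ae_restrict_iff' measurableSet_Ioc).2 (ae_of_all _ fun μ hμ => ?_)
      rw [Real.norm_eq_abs, abs_of_nonneg (hKnn μ (hIabIcc hμ))]
      exact hKub μ (hIabIcc hμ)
  have hfmem : MemLp f' (ENNReal.ofReal q) (volume.restrict (Set.Ioc a b)) := by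
    refine MemLp.of_bound haesm (M ^ (1/q)) ?_
    refine (ae_restrict_iff' measurableSet_Ioc).2 (ae_of_all _ fun μ hμ => ?_)
    have h1 : |f' μ| ^ q ≤ M := hg_bd μ (hIccuv (hIabIcc hμ))
    have h2 : (|f' μ| ^ q) ^ (1/q) ≤ M ^ (1/q) :=
      Real.rpow_le_rpow (by positivity) h1 (by positivity)
    rw [hq_inv _ (abs_nonneg _)] at h2
    rwa [Real.norm_eq_abs]
  have hH := MeasureTheory.integral_mul_norm_le_Lp_mul_Lq hconj hKmem hfmem
  -- step 1 : pass to set integral of product of norms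
  have hstep1 : |∫ μ in a..b, K μ * f' μ| ≤ ∫ μ in Set.Ioc a b, ‖K μ‖ * ‖f' μ‖ := by
    refine le_trans (intervalIntegral.abs_integral_le_integral_abs hab) (le_of_eq ?_)
    rw [intervalIntegral.integral_of_le hab]
    refine setIntegral_congr_fun measurableSet_Ioc fun μ _ => ?_
    simp [abs_mul]
  -- compute the p-integral
  have hcontabs : Continuous fun r : ℝ => |r| ^ q :=
    continuous_abs.rpow_const fun _ => Or.inr hq0.le
  have hup : u ^ (p + 1) ≤ v ^ (p + 1) :=
    Real.rpow_le_rpow hu.le huv.le (by linarith)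
  have hL0 : 0 ≤ (v ^ (p + 1) - u ^ (p + 1)) / ((p + 1) * (v - u)) :=
    div_nonneg (by linarith) (by positivity)
  have hKp : ∫ μ in Set.Ioc a b, ‖K μ‖ ^ p
      = (b - a) ^ (p + 1) * ((v ^ (p + 1) - u ^ (p + 1)) / ((p + 1) * (v - u))) := by
    have h1 : ∫ μ in Set.Ioc a b, ‖K μ‖ ^ p = ∫ μ in a..b, ((v - u) * μ + -c) ^ p := by
      rw [intervalIntegral.integral_of_le hab]
      refine setIntegral_congr_fun measurableSet_Ioc fun μ hμ => ?_
      rw [Real.norm_eq_abs, abs_of_nonneg (hKnn μ (hIabIcc hμ))]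
      congr 1
    have h2 := intervalIntegral.integral_comp_mul_add (a := a) (b := b)
      (fun y : ℝ => y ^ p) (ne_of_gt hvu) (-c)
    have e1 : (v - u) * a + -c = u * (b - a) := by rw [hc]; ring
    have e2 : (v - u) * b + -c = v * (b - a) := by rw [hc]; ring
    rw [h1, h2, e1, e2, integral_rpow (Or.inl (by linarith : (-1:ℝ) < p))]
    rw [Real.mul_rpow (by linarith : (0:ℝ) ≤ v) hba,
      Real.mul_rpow hu.le hba, smul_eq_mul]
    field_simp
  -- bound the q-integral
  have hg_ae : AEStronglyMeasurable g (volume.restrict (Set.Ioc a b)) :=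
    hcontabs.comp_aestronglyMeasurable haesm
  have hgint : IntervalIntegrable g volume a b := by
    rw [intervalIntegrable_iff_integrableOn_Ioc_of_le hab]
    refine Integrable.mono' (integrable_const M) hg_ae ?_
    refine (ae_restrict_iff' measurableSet_Ioc).2 (ae_of_all _ fun μ hμ => ?_)
    rw [Real.norm_eq_abs, abs_of_nonneg (by positivity)]
    exact hg_bd μ (hIccuv (hIabIcc hμ))
  have hgrint : IntervalIntegrable (fun μ => g (a + b - μ)) volume a b := by
    have := hgint.comp_sub_left (a + b)
    rw [add_sub_cancel_right, add_sub_cancel_left] at this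
    exact this.symm
  have hrefl : ∫ μ in a..b, g (a + b - μ) = ∫ μ in a..b, g μ := by
    rw [intervalIntegral.integral_comp_sub_left g (a + b),
      add_sub_cancel_right, add_sub_cancel_left]
  have hsum : ∫ μ in a..b, (g μ + g (a + b - μ))
      ≤ ∫ μ in a..b, ((2:ℝ) ^ s * G ^ q) := by
    refine intervalIntegral.integral_mono_on hab (hgint.add hgrint)
      (intervalIntegrable_const) fun μ hμ => ?_
    have hμuv : μ ∈ Set.Icc u v := hIccuv hμ
    have hμ' : a + b - μ ∈ Set.Icc u v := by
      simp only [Set.mem_Icc] at hμ ⊢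
      constructor <;> linarith [hμ.1, hμ.2]
    have h := hsconc μ hμuv (a + b - μ) hμ' (1/2) (by simp only [Set.mem_Icc]; norm_num)
    have harg : (1/2 : ℝ) * μ + (1 - 1/2) * (a + b - μ) = (a + b) / 2 := by ring
    have h12 : (1 - (1:ℝ)/2) = 1/2 := by norm_num
    rw [harg, h12] at h
    have heq : g μ + g (a + b - μ) = 2 ^ s * ((1/2:ℝ) ^ s * (g μ + g (a + b - μ))) := by
      rw [← mul_assoc, h2s, one_mul]
    rw [heq]
    have hle : (1/2:ℝ) ^ s * (g μ + g (a + b - μ)) ≤ G ^ q := by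
      rw [mul_add]; exact h
    exact mul_le_mul_of_nonneg_left hle h2spos.le
  have h2s1 : (2:ℝ) ^ (s - 1) = 2 ^ s / 2 := by
    rw [Real.rpow_sub (by norm_num : (0:ℝ) < 2), Real.rpow_one]
  have hgq : ∫ μ in Set.Ioc a b, ‖f' μ‖ ^ q ≤ (b - a) * ((2:ℝ) ^ (s - 1) * G ^ q) := by
    have hv1 : ∫ μ in a..b, (g μ + g (a + b - μ)) = 2 * ∫ μ in a..b, g μ := by
      rw [intervalIntegral.integral_add hgint hgrint, hrefl]; ring
    have hv2 : ∫ μ in a..b, ((2:ℝ) ^ s * G ^ q) = (b - a) * (2 ^ s * G ^ q) := by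
      rw [intervalIntegral.integral_const, smul_eq_mul]
    have hset : ∫ μ in Set.Ioc a b, ‖f' μ‖ ^ q = ∫ μ in a..b, g μ := by
      rw [intervalIntegral.integral_of_le hab]
      refine setIntegral_congr_fun measurableSet_Ioc fun μ _ => ?_
      rw [Real.norm_eq_abs]
    rw [hset, h2s1]
    rw [hv1, hv2] at hsum
    nlinarith [hsum]
  -- put everything together
  have hIq0 : 0 ≤ ∫ μ in Set.Ioc a b, ‖f' μ‖ ^ q :=
    integral_nonneg fun μ => by positivity
  have hfinal : (∫ μ in Set.Ioc a b, ‖K μ‖ ^ p) ^ (1/p) * (∫ μ in Set.Ioc a b, ‖f' μ‖ ^ q) ^ (1/q)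
      ≤ (b - a) ^ 2 * ((v ^ (p + 1) - u ^ (p + 1)) / ((p + 1) * (v - u))) ^ (1 / p)
        * ((2:ℝ) ^ ((s - 1) / q) * G) := by
    have hmono : (∫ μ in Set.Ioc a b, ‖f' μ‖ ^ q) ^ (1/q)
        ≤ ((b - a) * ((2:ℝ) ^ (s - 1) * G ^ q)) ^ (1/q) :=
      Real.rpow_le_rpow hIq0 hgq (by positivity)
    have hstep : (∫ μ in Set.Ioc a b, ‖K μ‖ ^ p) ^ (1/p) * (∫ μ in Set.Ioc a b, ‖f' μ‖ ^ q) ^ (1/q)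
        ≤ ((b - a) ^ (p + 1) * ((v ^ (p + 1) - u ^ (p + 1)) / ((p + 1) * (v - u)))) ^ (1/p)
          * ((b - a) * ((2:ℝ) ^ (s - 1) * G ^ q)) ^ (1/q) := by
      rw [hKp]
      exact mul_le_mul_of_nonneg_left hmono (by positivity)
    refine le_trans hstep (le_of_eq ?_)
    rw [Real.mul_rpow (by positivity) hL0, Real.mul_rpow hba (by positivity),
      Real.mul_rpow (by positivity : (0:ℝ) ≤ (2:ℝ) ^ (s-1)) (by positivity : (0:ℝ) ≤ G ^ q),
      hq_inv G hG, ← Real.rpow_mul hba, ← Real.rpow_mul (by norm_num : (0:ℝ) ≤ 2),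
      mul_one_div, mul_one_div]
    have hpne : p ≠ 0 := ne_of_gt hp0
    have hexp : (p + 1) / p + 1/q = 2 := by
      have h1 : (p + 1) / p = 1 + 1/p := by field_simp
      rw [h1]; linarith
    have hpow : (b - a) ^ ((p + 1) / p) * (b - a) ^ (1/q) = (b - a) ^ 2 := by
      rw [← Real.rpow_add' hba (by rw [hexp]; norm_num), hexp]
      rw [show (2:ℝ) = ((2:ℕ):ℝ) by norm_num, Real.rpow_natCast]
    calc (b - a) ^ ((p + 1) / p)
          * ((v ^ (p + 1) - u ^ (p + 1)) / ((p + 1) * (v - u))) ^ (1/p)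
          * ((b - a) ^ (1/q) * ((2:ℝ) ^ ((s - 1)/q) * G))
        = ((b - a) ^ ((p + 1) / p) * (b - a) ^ (1/q))
          * ((v ^ (p + 1) - u ^ (p + 1)) / ((p + 1) * (v - u))) ^ (1/p)
          * ((2:ℝ) ^ ((s - 1)/q) * G) := by ring
      _ = (b - a) ^ 2 * ((v ^ (p + 1) - u ^ (p + 1)) / ((p + 1) * (v - u))) ^ (1/p)
          * ((2:ℝ) ^ ((s - 1)/q) * G) := by rw [hpow]
  calc |∫ μ in a..b, ((v - u) * μ - ((v - u) * a - u * (b - a))) * f' μ|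
      = |∫ μ in a..b, K μ * f' μ| := rfl
    _ ≤ ∫ μ in Set.Ioc a b, ‖K μ‖ * ‖f' μ‖ := hstep1
    _ ≤ (∫ μ in Set.Ioc a b, ‖K μ‖ ^ p) ^ (1/p) * (∫ μ in Set.Ioc a b, ‖f' μ‖ ^ q) ^ (1/q) := hH
    _ ≤ _ := hfinal

set_option maxHeartbeats 1000000 in
theorem stmt_16 (f f' : ℝ → ℝ) (u v p q s : ℝ) (hu : 0 < u) (huv : u < v)
    (hq : 1 < q) (hpq : 1 / p + 1 / q = 1) (hs0 : 0 < s) (hs1 : s ≤ 1)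
    (hderiv : ∀ y ∈ interior (Set.Ici (0:ℝ)), HasDerivAt f (f' y) y)
    (hint : IntervalIntegrable f' MeasureTheory.volume u v)
    (hsconc : ∀ a ∈ Set.Icc u v, ∀ b ∈ Set.Icc u v, ∀ t ∈ Set.Icc (0:ℝ) 1,
      t ^ s * |f' a| ^ q + (1 - t) ^ s * |f' b| ^ q ≤ |f' (t * a + (1 - t) * b)| ^ q)
    (x : ℝ) (hx : x ∈ Set.Icc u v) :
    |((v - x) * (v * f v - u * f x) + (x - u) * (v * f x - u * f u)) / (v - u) ^ 2
        - (1 / (v - u)) * ∫ μ in u..v, f μ|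
      ≤ ((2:ℝ) ^ ((s - 1) / q) *
            ((v ^ (p + 1) - u ^ (p + 1)) / ((p + 1) * (v - u))) ^ (1 / p) / (v - u) ^ 2) *
          ((v - x) ^ 2 * |f' ((x + v) / 2)| + (x - u) ^ 2 * |f' ((x + u) / 2)|) := by
  have hvu : 0 < v - u := by linarith
  have hux : u ≤ x := hx.1
  have hxv : x ≤ v := hx.2
  have hderiv' : ∀ y ∈ Set.Icc u v, HasDerivAt f (f' y) y := fun y hy =>
    hderiv y (by rw [interior_Ici]; exact Set.mem_Ioi.2 (lt_of_lt_of_le hu hy.1))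
  have hfc : ContinuousOn f (Set.Icc u v) := fun y hy =>
    (hderiv' y hy).continuousAt.continuousWithinAt
  have hfint : ∀ a b : ℝ, u ≤ a → a ≤ b → b ≤ v → IntervalIntegrable f volume a b := by
    intro a b h1 h2 h3
    apply ContinuousOn.intervalIntegrable
    rw [Set.uIcc_of_le h2]
    exact hfc.mono (Set.Icc_subset_Icc h1 h3)
  have hibp : ∀ a b : ℝ, u ≤ a → a ≤ b → b ≤ v → ∀ c : ℝ,
      ∫ μ in a..b, ((v - u) * μ - c) * f' μ
        = ((v - u) * b - c) * f b - ((v - u) * a - c) * f a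
          - (v - u) * ∫ μ in a..b, f μ := by
    intro a b h1 h2 h3 c
    have hsub : Set.uIcc a b ⊆ Set.Icc u v := by
      rw [Set.uIcc_of_le h2]; exact Set.Icc_subset_Icc h1 h3
    have h := intervalIntegral.integral_mul_deriv_eq_deriv_mul
      (u := fun μ => (v - u) * μ - c) (u' := fun _ => (v - u)) (v := f) (v' := f')
      (fun μ hμ => by simpa using ((hasDerivAt_id μ).const_mul (v - u)).sub_const c)
      (fun μ hμ => hderiv' μ (hsub hμ))
      intervalIntegrable_const
      (hint.mono_set (by
        rw [Set.uIcc_of_le h2, Set.uIcc_of_le (le_of_lt huv)]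
        exact Set.Icc_subset_Icc h1 h3))
    rw [h, intervalIntegral.integral_const_mul]
  set I1 : ℝ := ∫ μ in x..v, ((v - u) * μ - ((v - u) * x - u * (v - x))) * f' μ with hI1
  set I2 : ℝ := ∫ μ in u..x, ((v - u) * μ - ((v - u) * u - u * (x - u))) * f' μ with hI2
  have e1 := hibp x v hux hxv le_rfl ((v - u) * x - u * (v - x))
  have e2 := hibp u x le_rfl hux hxv ((v - u) * u - u * (x - u))
  have hsplit : ∫ μ in u..v, f μ = (∫ μ in u..x, f μ) + ∫ μ in x..v, f μ :=
    (intervalIntegral.integral_add_adjacent_intervals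
      (hfint u x le_rfl hux hxv) (hfint x v hux hxv le_rfl)).symm
  have key1 := key_bound f' u v p q s hu huv hq hpq hs0 hs1 hint hsconc x v hux hxv le_rfl
  have key2 := key_bound f' u v p q s hu huv hq hpq hs0 hs1 hint hsconc u x le_rfl hux hxv
  rw [show ((u:ℝ) + x) / 2 = (x + u) / 2 from by ring] at key2
  have hEeq : ((v - x) * (v * f v - u * f x) + (x - u) * (v * f x - u * f u)) / (v - u) ^ 2
      - (1 / (v - u)) * ∫ μ in u..v, f μ = (I2 + I1) / (v - u) ^ 2 := by
    rw [hsplit, hI1, hI2, e1, e2]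
    field_simp
    ring
  rw [hEeq, abs_div, abs_of_pos (by positivity : (0:ℝ) < (v - u) ^ 2)]
  set L : ℝ := ((v ^ (p + 1) - u ^ (p + 1)) / ((p + 1) * (v - u))) ^ (1 / p) with hL
  calc |I2 + I1| / (v - u) ^ 2 ≤ (|I2| + |I1|) / (v - u) ^ 2 := by
        gcongr
        exact abs_add_le _ _
    _ ≤ ((x - u) ^ 2 * L * ((2:ℝ) ^ ((s - 1) / q) * |f' ((x + u) / 2)|)
          + (v - x) ^ 2 * L * ((2:ℝ) ^ ((s - 1) / q) * |f' ((x + v) / 2)|)) / (v - u) ^ 2 := by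
        rw [div_le_div_iff_of_pos_right (by positivity : (0:ℝ) < (v - u) ^ 2)]
        exact add_le_add key2 key1
    _ = ((2:ℝ) ^ ((s - 1) / q) * L / (v - u) ^ 2) *
          ((v - x) ^ 2 * |f' ((x + v) / 2)| + (x - u) ^ 2 * |f' ((x + u) / 2)|) := by
        ring
end

section
/- Let J = [0,∞) and let f : J → ℝ be differentiable on the interior of J with f' integrable on [u,v], where u, v ∈ J and 0 < u < v. Let q > 1 and p satisfy 1/p + 1/q = 1, and let s ∈ (0,1]. If |f'|^q is s-concave in the second sense on [u,v], then |(v·f(v) - u·f(u))/(2(v-u)) + (1/2)·f((u+v)/2) - (1/(v-u))·∫_u^v f(μ) dμ| ≤ (2^{(s-1)/q}·L_p(u,v)/4)·[|f'((u+3v)/4)| + |f'((3u+v)/4)|]. -/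
open MeasureTheory intervalIntegral Set

lemma stmt18_half (f' : ℝ → ℝ) (u v p q s a b : ℝ) (hu : 0 < u) (huv : u < v)
    (hp : 1 < p) (hq : 1 < q) (hpq : 1 / p + 1 / q = 1) (hs0 : 0 < s) (hs1 : s ≤ 1)
    (ha : u ≤ a) (hab : a < b) (hb : b ≤ v) (hlen : b - a = (v - u) / 2)
    (hmeas : AEStronglyMeasurable f' (volume.restrict (Set.Ioc a b)))
    (hsconc : ∀ x ∈ Set.Icc u v, ∀ y ∈ Set.Icc u v, ∀ t ∈ Set.Icc (0:ℝ) 1,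
      t ^ s * |f' x| ^ q + (1 - t) ^ s * |f' y| ^ q ≤ |f' (t * x + (1 - t) * y)| ^ q) :
    ∫ μ in a..b, (2 * (μ - a) + u) * |f' μ| ≤
      ((v ^ (p + 1) - u ^ (p + 1)) / (2 * (p + 1))) ^ (1 / p)
        * ((2 ^ (s - 1) * ((v - u) / 2)) ^ (1 / q) * |f' ((a + b) / 2)|) := by
  have hq0 : 0 < q := lt_trans one_pos hq
  have hp0 : 0 < p := lt_trans one_pos hp
  set c : ℝ := (a + b) / 2 with hc
  -- key pointwise consequence of s-concavity
  have hpt : ∀ μ ∈ Set.Icc a b, |f' μ| ^ q + |f' (a + b - μ)| ^ q ≤ 2 ^ s * |f' c| ^ q := by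
    intro μ hμ
    have hμ' : a + b - μ ∈ Set.Icc a b := ⟨by linarith [hμ.2], by linarith [hμ.1]⟩
    have h1 : μ ∈ Set.Icc u v := ⟨le_trans ha hμ.1, le_trans hμ.2 hb⟩
    have h2 : a + b - μ ∈ Set.Icc u v := ⟨le_trans ha hμ'.1, le_trans hμ'.2 hb⟩
    have key := hsconc μ h1 (a + b - μ) h2 (1/2) (by norm_num)
    have harg : (1:ℝ)/2 * μ + (1 - 1/2) * (a + b - μ) = c := by rw [hc]; ring
    rw [harg] at key
    have h6 : (1 - 1/2 : ℝ) ^ s = (1/2 : ℝ) ^ s := by norm_num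
    rw [h6, ← mul_add] at key
    have hhalf : ((1:ℝ)/2) ^ s = ((2:ℝ) ^ s)⁻¹ := by
      rw [one_div, Real.inv_rpow (by norm_num)]
    rw [hhalf, inv_mul_le_iff₀ (Real.rpow_pos_of_pos two_pos s)] at key
    exact key
  have hptbd : ∀ μ ∈ Set.Icc a b, |f' μ| ^ q ≤ 2 * |f' c| ^ q := by
    intro μ hμ
    have h1 := hpt μ hμ
    have h2 : (0:ℝ) ≤ |f' (a + b - μ)| ^ q := Real.rpow_nonneg (abs_nonneg _) q
    have h3 : (2:ℝ) ^ s ≤ 2 := by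
      calc (2:ℝ) ^ s ≤ (2:ℝ) ^ (1:ℝ) :=
        Real.rpow_le_rpow_of_exponent_le (by norm_num) hs1
      _ = 2 := Real.rpow_one 2
    have h4 : (0:ℝ) ≤ |f' c| ^ q := Real.rpow_nonneg (abs_nonneg _) q
    nlinarith
  haveI : IsFiniteMeasure (volume.restrict (Set.Ioc a b)) := by
    constructor
    rw [Measure.restrict_apply_univ, Real.volume_Ioc]
    exact ENNReal.ofReal_lt_top
  set K : ℝ → ℝ := fun μ => 2 * (μ - a) + u with hK
  have hKcont : Continuous K := by fun_prop
  have hKmem : MemLp K (ENNReal.ofReal p) (volume.restrict (Set.Ioc a b)) := by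
    refine MemLp.of_bound hKcont.aestronglyMeasurable (2 * (b - a) + u) ?_
    rw [ae_restrict_iff' measurableSet_Ioc]
    refine ae_of_all _ fun μ hμ => ?_
    rw [Real.norm_eq_abs, abs_of_nonneg (by simp only [hK]; nlinarith [hμ.1, hμ.2])]
    simp only [hK]; nlinarith [hμ.1, hμ.2]
  have hGmeas : AEStronglyMeasurable (fun μ => |f' μ|) (volume.restrict (Set.Ioc a b)) :=
    hmeas.norm.congr (ae_of_all _ fun x => (Real.norm_eq_abs _))
  have hGmem : MemLp (fun μ => |f' μ|) (ENNReal.ofReal q) (volume.restrict (Set.Ioc a b)) := by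
    refine MemLp.of_bound hGmeas ((2 * |f' c| ^ q) ^ (1/q)) ?_
    rw [ae_restrict_iff' measurableSet_Ioc]
    refine ae_of_all _ fun μ hμ => ?_
    have h1 := hptbd μ (Ioc_subset_Icc_self hμ)
    have h2 : |f' μ| = (|f' μ| ^ q) ^ (1/q) := by
      rw [← Real.rpow_mul (abs_nonneg _), mul_one_div_cancel hq0.ne', Real.rpow_one]
    rw [Real.norm_eq_abs, abs_abs, h2]
    exact Real.rpow_le_rpow (Real.rpow_nonneg (abs_nonneg _) q) h1 (by positivity)
  have hpq' : p.HolderConjugate q := ⟨by rw [inv_one, ← one_div, ← one_div]; exact hpq, hp0, hq0⟩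
  have holder := integral_mul_le_Lp_mul_Lq_of_nonneg hpq'
    (μ := volume.restrict (Set.Ioc a b)) (f := K) (g := fun μ => |f' μ|)
    ((ae_restrict_iff' measurableSet_Ioc).2 (ae_of_all _ fun μ hμ => by
      simp only [hK, Pi.zero_apply]; nlinarith [hμ.1, hμ.2]))
    (ae_of_all _ fun μ => abs_nonneg _) hKmem hGmem
  -- value of ∫ K^p
  have hKp : (∫ μ in Set.Ioc a b, K μ ^ p) = (v ^ (p + 1) - u ^ (p + 1)) / (2 * (p + 1)) := by
    rw [← integral_of_le hab.le]
    have hd : ∀ μ ∈ Set.uIcc a b, HasDerivAt (fun x => (2 * (x - a) + u) ^ (p+1) / (2 * (p+1)))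
        (K μ ^ p) μ := by
      intro μ hμ
      rw [Set.uIcc_of_le hab.le] at hμ
      have hKpos : 0 < K μ := by simp only [hK]; nlinarith [hμ.1, hμ.2]
      have h1 : HasDerivAt (fun x => 2 * (x - a) + u) 2 μ := by
        simpa using (((hasDerivAt_id μ).sub_const a).const_mul 2).add_const u
      have h2 : HasDerivAt (fun y : ℝ => y ^ (p+1)) ((p+1) * K μ ^ (p+1-1)) (K μ) :=
        Real.hasDerivAt_rpow_const (Or.inl hKpos.ne')
      have h4 := (h2.comp μ h1).div_const (2 * (p+1))
      refine h4.congr_deriv ?_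
      rw [add_sub_cancel_right]
      field_simp
    rw [integral_eq_sub_of_hasDerivAt hd ?_]
    · have h5 : 2 * (b - a) + u = v := by linarith [hlen]
      simp only [sub_self, mul_zero, zero_add, h5]
      rw [div_sub_div_same]
    · apply ContinuousOn.intervalIntegrable
      intro μ hμ
      rw [Set.uIcc_of_le hab.le] at hμ
      have hKpos : 0 < K μ := by simp only [hK]; nlinarith [hμ.1, hμ.2]
      exact (hKcont.continuousAt.rpow_const (Or.inl hKpos.ne')).continuousWithinAt
  -- Hermite-Hadamard-type bound on ∫ |f'|^q
  have hGq_int : IntervalIntegrable (fun μ => |f' μ| ^ q) volume a b := by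
    rw [intervalIntegrable_iff_integrableOn_Ioc_of_le hab.le]
    refine Integrable.mono' (integrable_const (2 * |f' c| ^ q))
      ((Real.continuous_rpow_const hq0.le).comp_aestronglyMeasurable hGmeas) ?_
    rw [ae_restrict_iff' measurableSet_Ioc]
    refine ae_of_all _ fun μ hμ => ?_
    rw [Real.norm_eq_abs, abs_of_nonneg (Real.rpow_nonneg (abs_nonneg _) q)]
    exact hptbd μ (Ioc_subset_Icc_self hμ)
  have hGq_int' : IntervalIntegrable (fun μ => |f' (a + b - μ)| ^ q) volume a b := by
    have := (hGq_int.comp_sub_left (a + b)).symm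
    simpa using this
  have hrefl : (∫ x in a..b, |f' (a + b - x)| ^ q) = ∫ x in a..b, |f' x| ^ q := by
    have := integral_comp_sub_left (a := a) (b := b) (fun x => |f' x| ^ q) (a + b)
    simpa using this
  have hIq : (∫ μ in a..b, |f' μ| ^ q) ≤ 2 ^ (s-1) * ((v - u) / 2) * |f' c| ^ q := by
    have hsum : (∫ x in a..b, (|f' x| ^ q + |f' (a + b - x)| ^ q))
        ≤ ∫ _x in a..b, (2:ℝ) ^ s * |f' c| ^ q := by
      refine integral_mono_on hab.le (hGq_int.add hGq_int') intervalIntegrable_const ?_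
      exact fun x hx => hpt x hx
    rw [integral_add hGq_int hGq_int', hrefl, intervalIntegral.integral_const, smul_eq_mul] at hsum
    have h2s : (2:ℝ) ^ (s-1) * ((v-u)/2) * |f' c| ^ q = ((b - a) * (2 ^ s * |f' c| ^ q)) / 2 := by
      rw [hlen, Real.rpow_sub two_pos, Real.rpow_one]
      ring
    rw [h2s]
    linarith
  -- combine
  rw [integral_of_le hab.le]
  have hbase1 : (0:ℝ) ≤ (v ^ (p + 1) - u ^ (p + 1)) / (2 * (p + 1)) := by
    have : u ^ (p+1) ≤ v ^ (p+1) := Real.rpow_le_rpow hu.le huv.le (by linarith)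
    have hd : (0:ℝ) < 2 * (p+1) := by linarith
    exact div_nonneg (by linarith) hd.le
  have hC1 : (0:ℝ) ≤ ((v ^ (p + 1) - u ^ (p + 1)) / (2 * (p + 1))) ^ (1/p) :=
    Real.rpow_nonneg hbase1 _
  have hIq' : (∫ μ in Set.Ioc a b, |f' μ| ^ q) ^ (1/q)
      ≤ (2 ^ (s-1) * ((v - u) / 2)) ^ (1/q) * |f' c| := by
    rw [← integral_of_le hab.le]
    have h1 : (∫ μ in a..b, |f' μ| ^ q) ^ (1/q)
        ≤ (2 ^ (s-1) * ((v - u) / 2) * |f' c| ^ q) ^ (1/q) := by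
      refine Real.rpow_le_rpow ?_ hIq (one_div_nonneg.2 hq0.le)
      refine intervalIntegral.integral_nonneg hab.le fun x _ => Real.rpow_nonneg (abs_nonneg _) q
    refine h1.trans_eq ?_
    have hA : (0:ℝ) ≤ 2 ^ (s-1) * ((v - u) / 2) :=
      mul_nonneg (Real.rpow_nonneg (by norm_num) _) (by linarith)
    rw [Real.mul_rpow hA (Real.rpow_nonneg (abs_nonneg _) q),
      ← Real.rpow_mul (abs_nonneg _), mul_one_div_cancel hq0.ne', Real.rpow_one]
  calc (∫ μ in Set.Ioc a b, K μ * |f' μ|)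
      ≤ (∫ μ in Set.Ioc a b, K μ ^ p) ^ (1/p) * (∫ μ in Set.Ioc a b, |f' μ| ^ q) ^ (1/q) :=
        holder
    _ ≤ ((v ^ (p + 1) - u ^ (p + 1)) / (2 * (p + 1))) ^ (1/p)
        * ((2 ^ (s-1) * ((v - u) / 2)) ^ (1/q) * |f' c|) := by
        rw [hKp]
        exact mul_le_mul_of_nonneg_left hIq' hC1

set_option maxHeartbeats 1600000 in
theorem stmt_18 (f f' : ℝ → ℝ) (u v p q s : ℝ) (hu : 0 < u) (huv : u < v)
    (hq : 1 < q) (hpq : 1 / p + 1 / q = 1) (hs0 : 0 < s) (hs1 : s ≤ 1)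
    (hderiv : ∀ y ∈ interior (Set.Ici (0:ℝ)), HasDerivAt f (f' y) y)
    (hint : IntervalIntegrable f' MeasureTheory.volume u v)
    (hsconc : ∀ a ∈ Set.Icc u v, ∀ b ∈ Set.Icc u v, ∀ t ∈ Set.Icc (0:ℝ) 1,
      t ^ s * |f' a| ^ q + (1 - t) ^ s * |f' b| ^ q ≤ |f' (t * a + (1 - t) * b)| ^ q) :
    |(v * f v - u * f u) / (2 * (v - u)) + (1 / 2) * f ((u + v) / 2)
        - (1 / (v - u)) * ∫ μ in u..v, f μ|
      ≤ ((2:ℝ) ^ ((s - 1) / q) *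
            ((v ^ (p + 1) - u ^ (p + 1)) / ((p + 1) * (v - u))) ^ (1 / p) / 4) *
          (|f' ((u + 3 * v) / 4)| + |f' ((3 * u + v) / 4)|) := by
  have hq0 : 0 < q := lt_trans one_pos hq
  have hiq1 : 1 / q < 1 := by rw [div_lt_one hq0]; exact hq
  have hiq0 : 0 < 1 / q := by positivity
  have hp0 : 0 < p := one_div_pos.1 (by linarith)
  have hp : 1 < p := (div_lt_one hp0).1 (by linarith)
  have hvu : (0:ℝ) < v - u := by linarith
  set m : ℝ := (u + v) / 2 with hm
  have hum : u < m := by rw [hm]; linarith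
  have hmv : m < v := by rw [hm]; linarith
  -- basic continuity / integrability
  have hcf : ∀ x ∈ Set.Icc u v, ContinuousAt f x := by
    intro x hx
    exact (hderiv x (by rw [interior_Ici]; exact lt_of_lt_of_le hu hx.1)).continuousAt
  have hfc1 : ContinuousOn f (Set.uIcc u m) := by
    rw [Set.uIcc_of_le hum.le]
    exact fun x hx => (hcf x ⟨hx.1, le_trans hx.2 hmv.le⟩).continuousWithinAt
  have hfc2 : ContinuousOn f (Set.uIcc m v) := by
    rw [Set.uIcc_of_le hmv.le]
    exact fun x hx => (hcf x ⟨le_trans hum.le hx.1, hx.2⟩).continuousWithinAt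
  have hif1 : IntervalIntegrable f volume u m := hfc1.intervalIntegrable
  have hif2 : IntervalIntegrable f volume m v := hfc2.intervalIntegrable
  have hif'1 : IntervalIntegrable f' volume u m := by
    apply hint.mono_set
    rw [Set.uIcc_of_le hum.le, Set.uIcc_of_le huv.le]
    exact Set.Icc_subset_Icc le_rfl hmv.le
  have hif'2 : IntervalIntegrable f' volume m v := by
    apply hint.mono_set
    rw [Set.uIcc_of_le hmv.le, Set.uIcc_of_le huv.le]
    exact Set.Icc_subset_Icc hum.le le_rfl
  -- integration by parts on both halves
  have hdK1 : ∀ x ∈ Set.Ioo (min u m) (max u m), HasDerivAt (fun μ => 2 * (μ - u) + u) 2 x :=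
    fun x _ => by simpa using (((hasDerivAt_id x).sub_const u).const_mul 2).add_const u
  have hdK2 : ∀ x ∈ Set.Ioo (min m v) (max m v), HasDerivAt (fun μ => 2 * (μ - m) + u) 2 x :=
    fun x _ => by simpa using (((hasDerivAt_id x).sub_const m).const_mul 2).add_const u
  have hdf1 : ∀ x ∈ Set.Ioo (min u m) (max u m), HasDerivAt f (f' x) x := by
    intro x hx
    rw [min_eq_left hum.le, max_eq_right hum.le] at hx
    exact hderiv x (by rw [interior_Ici]; exact lt_trans hu hx.1)
  have hdf2 : ∀ x ∈ Set.Ioo (min m v) (max m v), HasDerivAt f (f' x) x := by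
    intro x hx
    rw [min_eq_left hmv.le, max_eq_right hmv.le] at hx
    exact hderiv x (by rw [interior_Ici]; exact lt_trans (lt_trans hu hum) hx.1)
  have I1 := integral_mul_deriv_eq_deriv_mul_of_hasDerivAt
    (u := fun μ => 2 * (μ - u) + u) (v := f) (u' := fun _ => 2) (v' := f')
    ((by fun_prop : Continuous fun μ : ℝ => 2 * (μ - u) + u).continuousOn) hfc1
    hdK1 hdf1 intervalIntegrable_const hif'1
  have I2 := integral_mul_deriv_eq_deriv_mul_of_hasDerivAt
    (u := fun μ => 2 * (μ - m) + u) (v := f) (u' := fun _ => 2) (v' := f')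
    ((by fun_prop : Continuous fun μ : ℝ => 2 * (μ - m) + u).continuousOn) hfc2
    hdK2 hdf2 intervalIntegrable_const hif'2
  have hK1m : 2 * (m - u) + u = v := by rw [hm]; ring
  have hK1u : 2 * (u - u) + u = u := by ring
  have hK2v : 2 * (v - m) + u = v := by rw [hm]; ring
  have hK2m : 2 * (m - m) + u = u := by ring
  rw [hK1m, hK1u] at I1
  rw [hK2v, hK2m] at I2
  have hsplit : (∫ μ in u..m, f μ) + ∫ μ in m..v, f μ = ∫ μ in u..v, f μ :=
    integral_add_adjacent_intervals hif1 hif2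
  have htwo1 : (∫ μ in u..m, (2:ℝ) * f μ) = 2 * ∫ μ in u..m, f μ := by
    simpa using intervalIntegral.integral_const_mul (2:ℝ) f (a := u) (b := m)
  have htwo2 : (∫ μ in m..v, (2:ℝ) * f μ) = 2 * ∫ μ in m..v, f μ := by
    simpa using intervalIntegral.integral_const_mul (2:ℝ) f (a := m) (b := v)
  rw [htwo1] at I1
  rw [htwo2] at I2
  -- the identity
  have hE : (v * f v - u * f u) / (2 * (v - u)) + (1 / 2) * f m
        - (1 / (v - u)) * ∫ μ in u..v, f μ
      = ((∫ μ in u..m, (2 * (μ - u) + u) * f' μ)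
          + ∫ μ in m..v, (2 * (μ - m) + u) * f' μ) / (2 * (v - u)) := by
    rw [I1, I2, ← hsplit]
    field_simp
    ring
  rw [hE]
  -- bounds for the two half integrals
  have hmeas1 : AEStronglyMeasurable f' (volume.restrict (Set.Ioc u m)) :=
    hint.1.aestronglyMeasurable.mono_measure
      (Measure.restrict_mono (Set.Ioc_subset_Ioc le_rfl hmv.le) le_rfl)
  have hmeas2 : AEStronglyMeasurable f' (volume.restrict (Set.Ioc m v)) :=
    hint.1.aestronglyMeasurable.mono_measure
      (Measure.restrict_mono (Set.Ioc_subset_Ioc hum.le le_rfl) le_rfl)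
  set A : ℝ := ((v ^ (p + 1) - u ^ (p + 1)) / (2 * (p + 1))) ^ (1 / p) with hA
  set B : ℝ := (2 ^ (s - 1) * ((v - u) / 2)) ^ (1 / q) with hB
  have half1 := stmt18_half f' u v p q s u m hu huv hp hq hpq hs0 hs1
    le_rfl hum hmv.le (by rw [hm]; ring) hmeas1 hsconc
  have half2 := stmt18_half f' u v p q s m v hu huv hp hq hpq hs0 hs1
    hum.le hmv le_rfl (by rw [hm]; ring) hmeas2 hsconc
  have hc1 : (u + m) / 2 = (3 * u + v) / 4 := by rw [hm]; ring
  have hc2 : (m + v) / 2 = (u + 3 * v) / 4 := by rw [hm]; ring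
  rw [hc1] at half1
  rw [hc2] at half2
  have hbnd1 : |∫ μ in u..m, (2 * (μ - u) + u) * f' μ|
      ≤ A * (B * |f' ((3 * u + v) / 4)|) := by
    have h1 : |∫ μ in u..m, (2 * (μ - u) + u) * f' μ|
        ≤ ∫ μ in u..m, |(2 * (μ - u) + u) * f' μ| :=
      intervalIntegral.abs_integral_le_integral_abs hum.le
    have h2 : (∫ μ in u..m, |(2 * (μ - u) + u) * f' μ|)
        = ∫ μ in u..m, (2 * (μ - u) + u) * |f' μ| := by
      refine intervalIntegral.integral_congr fun x hx => ?_
      rw [Set.uIcc_of_le hum.le] at hx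
      rw [abs_mul, abs_of_nonneg (by nlinarith [hx.1, hu] : (0:ℝ) ≤ 2 * (x - u) + u)]
    exact h1.trans (h2.le.trans half1)
  have hbnd2 : |∫ μ in m..v, (2 * (μ - m) + u) * f' μ|
      ≤ A * (B * |f' ((u + 3 * v) / 4)|) := by
    have h1 : |∫ μ in m..v, (2 * (μ - m) + u) * f' μ|
        ≤ ∫ μ in m..v, |(2 * (μ - m) + u) * f' μ| :=
      intervalIntegral.abs_integral_le_integral_abs hmv.le
    have h2 : (∫ μ in m..v, |(2 * (μ - m) + u) * f' μ|)
        = ∫ μ in m..v, (2 * (μ - m) + u) * |f' μ| := by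
      refine intervalIntegral.integral_congr fun x hx => ?_
      rw [Set.uIcc_of_le hmv.le] at hx
      rw [abs_mul, abs_of_nonneg (by nlinarith [hx.1, hu] : (0:ℝ) ≤ 2 * (x - m) + u)]
    exact h1.trans (h2.le.trans half2)
  -- constant computation
  have hb0 : (0:ℝ) ≤ (v ^ (p + 1) - u ^ (p + 1)) / ((p + 1) * (v - u)) := by
    have h1 : u ^ (p+1) ≤ v ^ (p+1) := Real.rpow_le_rpow hu.le huv.le (by linarith)
    exact div_nonneg (by linarith) (mul_nonneg (by linarith) hvu.le)
  have hw : (0:ℝ) < (v - u) / 2 := by linarith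
  have hconst : A * B
      = 2 ^ ((s - 1) / q) * ((v ^ (p + 1) - u ^ (p + 1)) / ((p + 1) * (v - u))) ^ (1 / p)
        * ((v - u) / 2) := by
    have e1 : (v ^ (p + 1) - u ^ (p + 1)) / (2 * (p + 1))
        = ((v ^ (p + 1) - u ^ (p + 1)) / ((p + 1) * (v - u))) * ((v - u) / 2) := by
      field_simp
    rw [hA, hB, e1, Real.mul_rpow hb0 hw.le,
      Real.mul_rpow (Real.rpow_nonneg two_pos.le _) hw.le,
      ← Real.rpow_mul two_pos.le, mul_one_div]
    have e2 : ((v - u) / 2) ^ (1/p) * ((v - u) / 2) ^ (1/q) = (v - u) / 2 := by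
      rw [← Real.rpow_add hw, hpq, Real.rpow_one]
    calc ((v ^ (p + 1) - u ^ (p + 1)) / ((p + 1) * (v - u))) ^ (1/p) * ((v - u) / 2) ^ (1/p)
          * (2 ^ ((s - 1) / q) * ((v - u) / 2) ^ (1/q))
        = 2 ^ ((s - 1) / q) * ((v ^ (p + 1) - u ^ (p + 1)) / ((p + 1) * (v - u))) ^ (1/p)
          * (((v - u) / 2) ^ (1/p) * ((v - u) / 2) ^ (1/q)) := by ring
      _ = _ := by rw [e2]
  calc |((∫ μ in u..m, (2 * (μ - u) + u) * f' μ)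
          + ∫ μ in m..v, (2 * (μ - m) + u) * f' μ) / (2 * (v - u))|
      = |(∫ μ in u..m, (2 * (μ - u) + u) * f' μ)
          + ∫ μ in m..v, (2 * (μ - m) + u) * f' μ| / (2 * (v - u)) := by
        rw [abs_div, abs_of_pos (by linarith : (0:ℝ) < 2 * (v - u))]
    _ ≤ (|∫ μ in u..m, (2 * (μ - u) + u) * f' μ|
          + |∫ μ in m..v, (2 * (μ - m) + u) * f' μ|) / (2 * (v - u)) := by
        gcongr
        exact abs_add_le _ _
    _ ≤ (A * (B * |f' ((3 * u + v) / 4)|) + A * (B * |f' ((u + 3 * v) / 4)|)) / (2 * (v - u)) := by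
        gcongr
    _ = (A * B) * (|f' ((u + 3 * v) / 4)| + |f' ((3 * u + v) / 4)|) / (2 * (v - u)) := by ring
    _ = 2 ^ ((s - 1) / q) * ((v ^ (p + 1) - u ^ (p + 1)) / ((p + 1) * (v - u))) ^ (1 / p) / 4
          * (|f' ((u + 3 * v) / 4)| + |f' ((3 * u + v) / 4)|) := by
        rw [hconst]
        field_simp
        ring
end
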